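/- arXiv:math/0611920 — 2 statements merged into one kernel-verified Lean document; each statement's English description precedes it below -/
import Mathlib

section
/- Let D be a bounded open convex subset of ℝᴺ. If a sequence in D converges to a point of the horofunction boundary of the Hilbert metric on D (pointwise convergence of Hil(·,x_n) − Hil(b,x_n) to a horofunction), then the sequence converges in the usual Euclidean sense to a point of the Euclidean boundary ∂D. -/
open Set Filter Topology

variable {V : Type*} [NormedAddCommGroup V] [NormedSpace ℝ V] [FiniteDimensional ℝ V]

/-- An open cone: non-empty, open, convex, invariant under positive scaling, not containing 0. -/
def IsOpenCone (T : Set V) : Prop :=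
  T.Nonempty ∧ IsOpen T ∧ Convex ℝ T ∧ (∀ c : ℝ, 0 < c → ∀ u ∈ T, c • u ∈ T) ∧ (0 : V) ∉ T

/-- The gauge `M_T(y/x) = inf {λ > 0 : λ • x - y ∈ closure T}`. -/
noncomputable def funkM (T : Set V) (y x : V) : ℝ :=
  sInf {l : ℝ | 0 < l ∧ l • x - y ∈ closure T}

/-- The Funk metric `F_T(x,y) = log inf {λ > 0 : λ • y - x ∈ closure T}`. -/
noncomputable def funkF (T : Set V) (x y : V) : ℝ := Real.log (funkM T x y)

/-- The reverse Funk metric `r_T(x,y) = F_T(y,x)`. -/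
noncomputable def revF (T : Set V) (x y : V) : ℝ := Real.log (funkM T y x)

/-- The Hilbert metric as the symmetrisation of the Funk metric. -/
noncomputable def hilD (T : Set V) (x y : V) : ℝ := funkF T x y + revF T x y

/-- The dual cone, as a set of continuous linear functionals. -/
def dualCone (T : Set V) : Set (V →L[ℝ] ℝ) := {z | ∀ u ∈ T, 0 ≤ z u}

/-- The open tangent cone `τ(T,x) = {λ (w - x) : λ > 0, w ∈ T}`. -/
def openTangent (T : Set V) (x : V) : Set V :=
  {v | ∃ l : ℝ, 0 < l ∧ ∃ w ∈ T, v = l • (w - x)}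

/-- The cone over a convex domain `D ⊂ ℝᴺ`, realizing `D` as the cross section at
height one. -/
def coneOver {n : ℕ} (D : Set (Fin n → ℝ)) : Set ((Fin n → ℝ) × ℝ) :=
  {p | 0 < p.2 ∧ p.2⁻¹ • p.1 ∈ D}

/-- The Hilbert metric on `D`, via the cone over `D`. -/
noncomputable def hilOn {n : ℕ} (D : Set (Fin n → ℝ)) (x y : Fin n → ℝ) : ℝ :=
  hilD (coneOver D) (x, (1 : ℝ)) (y, (1 : ℝ))

namespace HilAux

variable {N : ℕ} {D : Set (Fin N → ℝ)}


variable {N : ℕ} {D : Set (Fin N → ℝ)}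

theorem coneOver_convex (hD : Convex ℝ D) : Convex ℝ (coneOver D) := by
  rintro ⟨p1, p2⟩ ⟨hp2, hp⟩ ⟨q1, q2⟩ ⟨hq2, hq⟩ a c ha hc hac
  simp only [coneOver, mem_setOf_eq, Prod.smul_mk, Prod.mk_add_mk, smul_eq_mul] at *
  have hs : 0 < a * p2 + c * q2 := by
    rcases eq_or_lt_of_le ha with h | h
    · have hc1 : c = 1 := by linarith
      simp only [← h, hc1, zero_mul, one_mul, zero_add]; exact hq2
    · nlinarith [mul_nonneg hc hq2.le]
  refine ⟨hs, ?_⟩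
  have h1 : (a * p2 + c * q2)⁻¹ • (a • p1 + c • q1)
      = (a * p2 / (a * p2 + c * q2)) • (p2⁻¹ • p1) + (c * q2 / (a * p2 + c * q2)) • (q2⁻¹ • q1) := by
    rw [smul_smul, smul_smul, smul_add, smul_smul, smul_smul]
    congr 1 <;> congr 1 <;> (field_simp; try ring)
  rw [h1]
  exact hD hp hq (by positivity) (by positivity)
    (by field_simp)

theorem coneOver_isOpen (hD : IsOpen D) : IsOpen (coneOver D) := by
  have h1 : ContinuousOn (fun p : (Fin N → ℝ) × ℝ => p.2⁻¹ • p.1) {p | 0 < p.2} := by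
    refine ContinuousOn.smul (f := fun p : (Fin N → ℝ) × ℝ => p.2⁻¹) (g := fun p => p.1) ?_ ?_
    · exact (continuousOn_snd).inv₀ (fun p hp => ne_of_gt hp)
    · exact continuousOn_fst
  have h2 : IsOpen {p : (Fin N → ℝ) × ℝ | 0 < p.2} := isOpen_lt continuous_const continuous_snd
  have := h1.isOpen_inter_preimage h2 hD
  exact this

theorem coneOver_smul (hc : (0:ℝ) < c) {p : (Fin N → ℝ) × ℝ} (hp : p ∈ coneOver D) :
    c • p ∈ coneOver D := by
  obtain ⟨h1, h2⟩ := hp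
  refine ⟨by simpa using mul_pos hc h1, ?_⟩
  have : (c • p).2⁻¹ • (c • p).1 = p.2⁻¹ • p.1 := by
    simp only [Prod.smul_snd, Prod.smul_fst, smul_eq_mul, mul_inv, smul_smul]
    congr 1
    field_simp
  rwa [this]

theorem clC_smul {c : ℝ} (hc : (0:ℝ) < c) {p : (Fin N → ℝ) × ℝ}
    (hp : p ∈ closure (coneOver D)) : c • p ∈ closure (coneOver D) := by
  have hmaps : MapsTo (fun q : (Fin N → ℝ) × ℝ => c • q) (coneOver D) (coneOver D) :=
    fun q hq => coneOver_smul hc hq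
  have hcont : Continuous (fun q : (Fin N → ℝ) × ℝ => c • q) := continuous_const_smul c
  have h1 : c • p ∈ closure ((fun q : (Fin N → ℝ) × ℝ => c • q) '' coneOver D) :=
    image_closure_subset_closure_image hcont ⟨p, hp, rfl⟩
  refine closure_mono ?_ h1
  rintro _ ⟨q, hq, rfl⟩
  exact coneOver_smul hc hq

theorem clC_add (hD : Convex ℝ D) {p q : (Fin N → ℝ) × ℝ}
    (hp : p ∈ closure (coneOver D)) (hq : q ∈ closure (coneOver D)) :
    p + q ∈ closure (coneOver D) := by
  have hconv : Convex ℝ (closure (coneOver D)) := (coneOver_convex hD).closure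
  have hmid : (1/2 : ℝ) • p + (1/2 : ℝ) • q ∈ closure (coneOver D) :=
    hconv hp hq (by norm_num) (by norm_num) (by norm_num)
  have := clC_smul (by norm_num : (0:ℝ) < 2) hmid
  convert this using 1
  module



theorem mem_clC_of {y : Fin N → ℝ} (hy : y ∈ closure D) {s : ℝ} (hs : 0 < s) :
    ((s • y, s) : (Fin N → ℝ) × ℝ) ∈ closure (coneOver D) := by
  have hcont : Continuous (fun d : Fin N → ℝ => ((s • d, s) : (Fin N → ℝ) × ℝ)) := by
    fun_prop
  have h1 : ((s • y, s) : (Fin N → ℝ) × ℝ)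
      ∈ closure ((fun d : Fin N → ℝ => ((s • d, s) : (Fin N → ℝ) × ℝ)) '' D) :=
    image_closure_subset_closure_image hcont ⟨y, hy, rfl⟩
  refine closure_mono ?_ h1
  rintro _ ⟨d, hd, rfl⟩
  refine ⟨hs, ?_⟩
  simpa [smul_smul, inv_mul_cancel₀ hs.ne'] using hd

theorem zero_mem_clC {b : Fin N → ℝ} (hb : b ∈ D) : (0 : (Fin N → ℝ) × ℝ) ∈ closure (coneOver D) := by
  have hmem : ∀ n : ℕ, (((n+1:ℝ)⁻¹ • b, (n+1:ℝ)⁻¹) : (Fin N → ℝ) × ℝ) ∈ coneOver D := by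
    intro n
    have hpos : (0:ℝ) < (n+1:ℝ)⁻¹ := by positivity
    refine ⟨hpos, ?_⟩
    simpa [smul_smul, mul_inv_cancel₀ (show ((n:ℝ)+1) ≠ 0 by positivity)] using hb
  have h2 : Tendsto (fun n : ℕ => (n+1:ℝ)⁻¹) atTop (𝓝 0) := by
    have := tendsto_one_div_add_atTop_nhds_zero_nat (𝕜 := ℝ)
    refine this.congr (fun n => ?_)
    rw [one_div]
  have htend : Tendsto (fun n : ℕ => (((n+1:ℝ)⁻¹ • b, (n+1:ℝ)⁻¹) : (Fin N → ℝ) × ℝ)) atTop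
      (𝓝 (0 : (Fin N → ℝ) × ℝ)) := by
    rw [show (0 : (Fin N → ℝ) × ℝ) = ((0 : Fin N → ℝ), (0:ℝ)) from rfl]
    refine Tendsto.prodMk_nhds ?_ h2
    simpa using h2.smul_const b
  exact mem_closure_of_tendsto htend (Eventually.of_forall hmem)

theorem clC_snd_nonneg {p : (Fin N → ℝ) × ℝ} (hp : p ∈ closure (coneOver D)) : 0 ≤ p.2 := by
  have : closure (coneOver D) ⊆ {p : (Fin N → ℝ) × ℝ | 0 ≤ p.2} :=
    closure_minimal (fun q hq => hq.1.le) (isClosed_le continuous_const continuous_snd)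
  exact this hp

theorem clC_cross {p : (Fin N → ℝ) × ℝ} (hp : p ∈ closure (coneOver D)) (h2 : 0 < p.2) :
    p.2⁻¹ • p.1 ∈ closure D := by
  obtain ⟨x, hxC, hx⟩ := mem_closure_iff_seq_limit.mp hp
  have hg : ContinuousAt (fun q : (Fin N → ℝ) × ℝ => q.2⁻¹ • q.1) p :=
    ((continuousAt_snd.inv₀ h2.ne').smul continuousAt_fst)
  have htd : Tendsto (fun n => (x n).2⁻¹ • (x n).1) atTop (𝓝 (p.2⁻¹ • p.1)) :=
    (hg.tendsto).comp hx
  exact mem_closure_of_tendsto htd (Eventually.of_forall fun n => (hxC n).2)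

theorem clC_bot (hDb : Bornology.IsBounded D) {p : (Fin N → ℝ) × ℝ}
    (hp : p ∈ closure (coneOver D)) (h2 : p.2 = 0) : p.1 = 0 := by
  obtain ⟨M, hM⟩ := hDb.exists_norm_le
  obtain ⟨x, hxC, hx⟩ := mem_closure_iff_seq_limit.mp hp
  have hMnn : 0 ≤ M := le_trans (norm_nonneg _) (hM _ (hxC 0).2)
  have hbd : ∀ n, ‖(x n).1‖ ≤ (x n).2 * M := by
    intro n
    have h1 : (x n).1 = (x n).2 • ((x n).2⁻¹ • (x n).1) := by
      rw [smul_smul, mul_inv_cancel₀ (hxC n).1.ne', one_smul]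
    calc ‖(x n).1‖ = |(x n).2| * ‖(x n).2⁻¹ • (x n).1‖ := by
          nth_rewrite 1 [h1]; rw [norm_smul, Real.norm_eq_abs]
    _ ≤ (x n).2 * M := by
        rw [abs_of_pos (hxC n).1]
        exact mul_le_mul_of_nonneg_left (hM _ (hxC n).2) (hxC n).1.le
  have hlim1 : Tendsto (fun n => ‖(x n).1‖) atTop (𝓝 ‖p.1‖) :=
    (continuous_norm.tendsto _).comp ((continuous_fst.tendsto _).comp hx)
  have hlim2 : Tendsto (fun n => (x n).2 * M) atTop (𝓝 (p.2 * M)) :=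
    ((continuous_snd.tendsto _).comp hx).mul_const M
  have : ‖p.1‖ ≤ p.2 * M := le_of_tendsto_of_tendsto' hlim1 hlim2 hbd
  rw [h2, zero_mul] at this
  exact norm_le_zero_iff.mp this

/-! ### The gauge `AA` -/

def SS (D : Set (Fin N → ℝ)) (x y : Fin N → ℝ) : Set ℝ :=
  {l : ℝ | 0 < l ∧ l • ((y, (1:ℝ)) : (Fin N → ℝ) × ℝ) - (x, (1:ℝ)) ∈ closure (coneOver D)}

noncomputable def AA (D : Set (Fin N → ℝ)) (x y : Fin N → ℝ) : ℝ := sInf (SS D x y)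

theorem pair_smul_sub (l : ℝ) (x y : Fin N → ℝ) :
    l • ((y, (1:ℝ)) : (Fin N → ℝ) × ℝ) - ((x, (1:ℝ)) : (Fin N → ℝ) × ℝ) = (l • y - x, l - 1) := by
  simp [Prod.ext_iff, smul_eq_mul]

theorem mem_SS_iff {l : ℝ} {x y : Fin N → ℝ} :
    l ∈ SS D x y ↔ 0 < l ∧ ((l • y - x, l - 1) : (Fin N → ℝ) × ℝ) ∈ closure (coneOver D) := by
  rw [SS, mem_setOf_eq, pair_smul_sub]

theorem SS_subset_Ici {x y : Fin N → ℝ} : SS D x y ⊆ Ici 1 := by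
  intro l hl
  have h2 : (0:ℝ) ≤ l - 1 := clC_snd_nonneg (mem_SS_iff.mp hl).2
  simp only [mem_Ici]
  linarith

theorem SS_bddBelow {x y : Fin N → ℝ} : BddBelow (SS D x y) :=
  ⟨1, fun _ hl => SS_subset_Ici hl⟩

theorem SS_nonempty (hDo : IsOpen D) {y : Fin N → ℝ} (hy : y ∈ D) (x : Fin N → ℝ) :
    (SS D x y).Nonempty := by
  obtain ⟨ε, hε, hball⟩ := Metric.isOpen_iff.mp hDo y hy
  refine ⟨2 + ‖y - x‖ / ε, ?_⟩
  have hnn : (0:ℝ) ≤ ‖y - x‖ / ε := by positivity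
  have hl1 : (1:ℝ) < 2 + ‖y - x‖ / ε := by linarith
  rw [mem_SS_iff]
  refine ⟨by linarith, subset_closure ?_⟩
  set l := 2 + ‖y - x‖ / ε with hldef
  have hlpos : (0:ℝ) < l - 1 := by simp only [hldef]; linarith
  refine ⟨by simpa using hlpos, ?_⟩
  apply hball
  simp only [Metric.mem_ball]
  have hcross : ((l - 1)⁻¹ • (l • y - x)) = y + (l-1)⁻¹ • (y - x) := by
    rw [show l • y - x = (l-1) • y + (y - x) by module]
    rw [smul_add, smul_smul, inv_mul_cancel₀ hlpos.ne', one_smul]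
  rw [dist_eq_norm]
  calc ‖(l - 1)⁻¹ • (l • y - x) - y‖ = ‖(l-1)⁻¹ • (y - x)‖ := by rw [hcross]; congr 1; abel
    _ = (l-1)⁻¹ * ‖y - x‖ := by rw [norm_smul, Real.norm_eq_abs, abs_of_pos (by positivity)]
    _ < ε := by
        rw [inv_mul_lt_iff₀ hlpos]
        have h1 : ‖y - x‖ / ε < l - 1 := by simp only [hldef]; linarith
        calc ‖y - x‖ = (‖y - x‖ / ε) * ε := by field_simp
          _ < (l - 1) * ε := by exact mul_lt_mul_of_pos_right h1 hε

theorem SS_isClosed {x y : Fin N → ℝ} : IsClosed (SS D x y) := by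
  have : SS D x y = Ici 1 ∩ (fun l : ℝ => l • ((y, (1:ℝ)) : (Fin N → ℝ) × ℝ) - (x, (1:ℝ))) ⁻¹'
      closure (coneOver D) := by
    ext l
    constructor
    · intro hl; exact ⟨SS_subset_Ici hl, hl.2⟩
    · rintro ⟨h1, h2⟩; exact ⟨lt_of_lt_of_le one_pos h1, h2⟩
  rw [this]
  exact isClosed_Ici.inter (IsClosed.preimage (by fun_prop) isClosed_closure)

theorem AA_mem (hne : (SS D x y).Nonempty) : AA D x y ∈ SS D x y :=
  SS_isClosed.csInf_mem hne SS_bddBelow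

theorem one_le_AA (hne : (SS D x y).Nonempty) : 1 ≤ AA D x y :=
  le_csInf hne (fun _ hl => SS_subset_Ici hl)

theorem AA_pos (hne : (SS D x y).Nonempty) : 0 < AA D x y :=
  lt_of_lt_of_le one_pos (one_le_AA hne)

theorem AA_le {l : ℝ} (hl : l ∈ SS D x y) : AA D x y ≤ l := csInf_le SS_bddBelow hl

theorem SS_mul (hDconv : Convex ℝ D) {l l' : ℝ} {x y z : Fin N → ℝ}
    (h1 : l ∈ SS D x y) (h2 : l' ∈ SS D y z) : l * l' ∈ SS D x z := by
  refine ⟨mul_pos h1.1 h2.1, ?_⟩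
  have key : (l * l') • ((z, (1:ℝ)) : (Fin N → ℝ) × ℝ) - (x, (1:ℝ))
      = l • (l' • ((z, (1:ℝ)) : (Fin N → ℝ) × ℝ) - (y, (1:ℝ)))
        + (l • ((y, (1:ℝ)) : (Fin N → ℝ) × ℝ) - (x, (1:ℝ))) := by module
  rw [key]
  exact clC_add hDconv (clC_smul h1.1 h2.2) h1.2

theorem AA_triangle (hDo : IsOpen D) (hDconv : Convex ℝ D) {x y z : Fin N → ℝ}
    (hy : y ∈ D) (hz : z ∈ D) : AA D x z ≤ AA D x y * AA D y z :=
  AA_le (SS_mul hDconv (AA_mem (SS_nonempty hDo hy x)) (AA_mem (SS_nonempty hDo hz y)))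

theorem AA_combo (hDo : IsOpen D) (hDconv : Convex ℝ D) {x x' z : Fin N → ℝ} (hz : z ∈ D)
    {a c : ℝ} (ha : 0 ≤ a) (hc : 0 ≤ c) (hac : a + c = 1) :
    AA D (a • x + c • x') z ≤ a * AA D x z + c * AA D x' z := by
  rcases eq_or_lt_of_le ha with h | hapos
  · have hc1 : c = 1 := by linarith
    simp [← h, hc1]
  rcases eq_or_lt_of_le hc with h | hcpos
  · have ha1 : a = 1 := by linarith
    simp [← h, ha1]
  have h1 := AA_mem (SS_nonempty hDo hz x)
  have h2 := AA_mem (SS_nonempty hDo hz x')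
  have p1 := AA_pos (SS_nonempty hDo hz x)
  have p2 := AA_pos (SS_nonempty hDo hz x')
  apply AA_le
  refine ⟨by nlinarith, ?_⟩
  have key : (a * AA D x z + c * AA D x' z) • ((z, (1:ℝ)) : (Fin N → ℝ) × ℝ)
      - ((a • x + c • x', (1:ℝ)) : (Fin N → ℝ) × ℝ)
      = a • (AA D x z • ((z, (1:ℝ)) : (Fin N → ℝ) × ℝ) - (x, (1:ℝ)))
        + c • (AA D x' z • ((z, (1:ℝ)) : (Fin N → ℝ) × ℝ) - (x', (1:ℝ))) := by
    have : ((a • x + c • x', (1:ℝ)) : (Fin N → ℝ) × ℝ)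
        = a • ((x, (1:ℝ)) : (Fin N → ℝ) × ℝ) + c • ((x', (1:ℝ)) : (Fin N → ℝ) × ℝ) := by
      simp [Prod.ext_iff, hac, smul_eq_mul]
    rw [this]; module
  rw [key]
  exact clC_add hDconv (clC_smul hapos h1.2) (clC_smul hcpos h2.2)

theorem AA_fst_continuous (hDo : IsOpen D) (hDconv : Convex ℝ D) {u : Fin N → ℝ} (hu : u ∈ D) :
    Continuous (fun x => AA D x u) := by
  have hconv : ConvexOn ℝ univ (fun x => AA D x u) := by
    refine ⟨convex_univ, ?_⟩
    intro x _ x' _ a c ha hc hac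
    simpa [smul_eq_mul] using AA_combo hDo hDconv hu ha hc hac
  rw [← continuousOn_univ]
  exact hconv.continuousOn isOpen_univ

theorem AA_diag {p : Fin N → ℝ} (hp : p ∈ D) : AA D p p = 1 := by
  have h1 : (1:ℝ) ∈ SS D p p := by
    rw [mem_SS_iff]
    constructor
    · norm_num
    · simpa [Prod.mk_zero_zero] using zero_mem_clC hp
  exact le_antisymm (AA_le h1) (one_le_AA ⟨1, h1⟩)

theorem AA_diag_le {p y : Fin N → ℝ} {ε : ℝ} (hε : 0 < ε) (hball : Metric.ball p ε ⊆ D)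
    (hy : ‖y - p‖ < ε / 2) : AA D p y ≤ 1 + (2/ε) * ‖y - p‖ := by
  rcases eq_or_ne y p with rfl | hne
  · rw [AA_diag (hball (Metric.mem_ball_self hε))]
    simp only [sub_self, norm_zero, mul_zero, add_zero, le_refl]
  have hnorm : 0 < ‖y - p‖ := by
    rw [norm_pos_iff]; intro hcontra; exact hne (by rwa [sub_eq_zero] at hcontra)
  set l := 1 + (2/ε) * ‖y - p‖ with hldef
  have hl1 : 1 < l := by
    have := mul_pos (show (0:ℝ) < 2/ε by positivity) hnorm
    simp only [hldef]; linarith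
  have hlm : l - 1 = (2/ε) * ‖y - p‖ := by simp [hldef]
  apply AA_le
  rw [mem_SS_iff]
  refine ⟨by linarith, subset_closure ?_⟩
  refine ⟨by simpa using (by linarith : (0:ℝ) < l - 1), ?_⟩
  apply hball
  simp only [Metric.mem_ball]
  have hlpos : (0:ℝ) < l - 1 := by linarith
  have hcross : ((l - 1)⁻¹ • (l • y - p)) = y + (l-1)⁻¹ • (y - p) := by
    rw [show l • y - p = (l-1) • y + (y - p) by module]
    rw [smul_add, smul_smul, inv_mul_cancel₀ hlpos.ne', one_smul]
  rw [dist_eq_norm, hcross]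
  calc ‖y + (l-1)⁻¹ • (y - p) - p‖ ≤ ‖y - p‖ + ‖(l-1)⁻¹ • (y - p)‖ := by
        rw [show y + (l-1)⁻¹ • (y - p) - p = (y - p) + (l-1)⁻¹ • (y - p) by abel]
        exact norm_add_le _ _
    _ = ‖y - p‖ + (l-1)⁻¹ * ‖y - p‖ := by
        rw [norm_smul, Real.norm_eq_abs, abs_of_pos (by positivity)]
    _ < ε := by
        rw [hlm]
        have h2 : ((2/ε) * ‖y - p‖)⁻¹ * ‖y - p‖ = ε / 2 := by field_simp
        rw [h2]
        linarith

/-! ### Continuity -/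

theorem hilOn_eq' (D : Set (Fin N → ℝ)) (x y : Fin N → ℝ) :
    hilOn D x y = Real.log (AA D x y) + Real.log (AA D y x) := rfl

theorem AA_fst_tendsto (hDo : IsOpen D) (hDconv : Convex ℝ D) {u : Fin N → ℝ} (hu : u ∈ D)
    {x : ℕ → Fin N → ℝ} {q : Fin N → ℝ} (hxq : Tendsto x atTop (𝓝 q)) :
    Tendsto (fun k => AA D (x k) u) atTop (𝓝 (AA D q u)) :=
  ((AA_fst_continuous hDo hDconv hu).tendsto q).comp hxq

theorem AA_diag_tendsto (hDo : IsOpen D) {p : Fin N → ℝ} (hp : p ∈ D)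
    {x : ℕ → Fin N → ℝ} (hxp : Tendsto x atTop (𝓝 p)) :
    Tendsto (fun k => AA D p (x k)) atTop (𝓝 1) := by
  obtain ⟨ε, hε, hball⟩ := Metric.isOpen_iff.mp hDo p hp
  have hnorm : Tendsto (fun k => ‖x k - p‖) atTop (𝓝 0) := by
    have : Tendsto (fun k => x k - p) atTop (𝓝 (p - p)) := hxp.sub_const p
    rw [sub_self] at this
    simpa using this.norm
  have hev : ∀ᶠ k in atTop, ‖x k - p‖ < ε / 2 := by
    have h0 : (0:ℝ) < ε / 2 := by positivity
    exact hnorm.eventually_lt_const h0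
  have hupper : ∀ᶠ k in atTop, AA D p (x k) ≤ 1 + (2/ε) * ‖x k - p‖ := by
    filter_upwards [hev] with k hk
    exact AA_diag_le hε hball hk
  have hlower : ∀ᶠ k in atTop, 1 ≤ AA D p (x k) := by
    filter_upwards [hev] with k hk
    have hxk : x k ∈ D := by
      apply hball
      simp only [Metric.mem_ball, dist_eq_norm]
      linarith
    exact one_le_AA (SS_nonempty hDo hxk p)
  have hub : Tendsto (fun k => 1 + (2/ε) * ‖x k - p‖) atTop (𝓝 1) := by
    have := (hnorm.const_mul (2/ε)).const_add 1
    simpa using this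
  exact tendsto_of_tendsto_of_tendsto_of_le_of_le' tendsto_const_nhds hub hlower hupper

theorem log_AA_snd_tendsto (hDo : IsOpen D) (hDconv : Convex ℝ D) {u p : Fin N → ℝ}
    (hu : u ∈ D) (hp : p ∈ D) {x : ℕ → Fin N → ℝ} (hx : ∀ k, x k ∈ D)
    (hxp : Tendsto x atTop (𝓝 p)) :
    Tendsto (fun k => Real.log (AA D u (x k))) atTop (𝓝 (Real.log (AA D u p))) := by
  have hAup : 0 < AA D u p := AA_pos (SS_nonempty hDo hp u)
  have hAu : ∀ k, 0 < AA D u (x k) := fun k => AA_pos (SS_nonempty hDo (hx k) u)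
  have hmax1 : Tendsto (fun k => Real.log (AA D u p) + Real.log (AA D p (x k))) atTop
      (𝓝 (Real.log (AA D u p))) := by
    have h2 : Tendsto (fun k => Real.log (AA D p (x k))) atTop (𝓝 0) := by
      have := (AA_diag_tendsto hDo hp hxp).log (by norm_num)
      simpa using this
    simpa using (tendsto_const_nhds.add h2)
  have hmax2 : Tendsto (fun k => Real.log (AA D u p) - Real.log (AA D (x k) p)) atTop
      (𝓝 (Real.log (AA D u p))) := by
    have h2 : Tendsto (fun k => Real.log (AA D (x k) p)) atTop (𝓝 0) := by
      have h3 := (AA_fst_tendsto hDo hDconv hp hxp).log (by rw [AA_diag hp]; norm_num)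
      rw [AA_diag hp, Real.log_one] at h3
      exact h3
    simpa using (tendsto_const_nhds.sub h2)
  refine tendsto_of_tendsto_of_tendsto_of_le_of_le hmax2 hmax1 ?_ ?_
  · intro k
    have htri : AA D u p ≤ AA D u (x k) * AA D (x k) p := AA_triangle hDo hDconv (hx k) hp
    have h4 : Real.log (AA D u p) ≤ Real.log (AA D u (x k)) + Real.log (AA D (x k) p) := by
      calc Real.log (AA D u p) ≤ Real.log (AA D u (x k) * AA D (x k) p) :=
            Real.log_le_log hAup htri
        _ = _ := Real.log_mul (hAu k).ne' (AA_pos (SS_nonempty hDo hp (x k))).ne'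
    show Real.log (AA D u p) - Real.log (AA D (x k) p) ≤ Real.log (AA D u (x k))
    linarith
  · intro k
    have htri : AA D u (x k) ≤ AA D u p * AA D p (x k) := AA_triangle hDo hDconv hp (hx k)
    show Real.log (AA D u (x k)) ≤ Real.log (AA D u p) + Real.log (AA D p (x k))
    calc Real.log (AA D u (x k)) ≤ Real.log (AA D u p * AA D p (x k)) :=
          Real.log_le_log (hAu k) htri
      _ = _ := Real.log_mul hAup.ne' (AA_pos (SS_nonempty hDo (hx k) p)).ne'

/-! ### Boundary estimates -/

theorem ball_subset_of_SS (hDo : IsOpen D) (hDconv : Convex ℝ D) (hDb : Bornology.IsBounded D)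
    {b x : Fin N → ℝ} {ρ : ℝ} (hρ : 0 < ρ) (hball : Metric.ball b ρ ⊆ D)
    {l : ℝ} (hl : l ∈ SS D b x) : Metric.ball x (ρ / l) ⊆ D := by
  have hl1 : 1 ≤ l := SS_subset_Ici hl
  obtain ⟨hlpos, hmem⟩ := mem_SS_iff.mp hl
  rcases eq_or_lt_of_le hl1 with heq | hlt
  · have hx : l • x - b = 0 := clC_bot hDb hmem (by rw [← heq]; ring)
    have hxb : x = b := by
      rw [← heq, one_smul, sub_eq_zero] at hx
      exact hx
    rw [hxb, ← heq]
    simpa using hball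
  · have hw : (l - 1)⁻¹ • (l • x - b) ∈ closure D := by
      have := clC_cross hmem (by simp; linarith)
      simpa using this
    intro v hv
    simp only [Metric.mem_ball, dist_eq_norm] at hv
    have hkey : v = (1/l) • (b + l • (v - x)) + (1 - 1/l) • ((l - 1)⁻¹ • (l • x - b)) := by
      have hl0 : l ≠ 0 := by linarith
      have hl10 : l - 1 ≠ 0 := by linarith
      rw [smul_smul]
      have : (1 - 1/l) * (l-1)⁻¹ = 1/l := by field_simp
      rw [this]
      have expand : (1/l) • (b + l • (v - x)) + (1/l) • (l • x - b)
          = (1/l) • (l • v) := by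
        rw [← smul_add]
        congr 1
        module
      rw [expand, smul_smul]
      field_simp
      rw [one_smul]
    rw [hkey]
    have hin : b + l • (v - x) ∈ interior D := by
      rw [hDo.interior_eq]
      apply hball
      simp only [Metric.mem_ball, dist_eq_norm]
      have : ‖b + l • (v - x) - b‖ = l * ‖v - x‖ := by
        rw [show b + l • (v - x) - b = l • (v - x) by abel, norm_smul, Real.norm_eq_abs,
          abs_of_pos hlpos]
      rw [this]
      calc l * ‖v - x‖ < l * (ρ / l) := by
            apply mul_lt_mul_of_pos_left hv hlpos
        _ = ρ := by field_simp
    have ha1 : (0:ℝ) < 1/l := by positivity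
    have ha2 : (0:ℝ) ≤ 1 - 1/l := by
      rw [sub_nonneg, div_le_one hlpos]; linarith
    have ha3 : 1/l + (1 - 1/l) = 1 := by ring
    have hcombo := hDconv.combo_interior_closure_mem_interior (a := 1/l) (b := 1 - 1/l)
      hin hw ha1 ha2 ha3
    rwa [hDo.interior_eq] at hcombo

theorem AA_lower (hDo : IsOpen D) (hDconv : Convex ℝ D) (hDb : Bornology.IsBounded D)
    {b x ξ : Fin N → ℝ} {ρ : ℝ} (hρ : 0 < ρ) (hball : Metric.ball b ρ ⊆ D)
    (hx : x ∈ D) (hξ : ξ ∉ D) : ρ / ‖x - ξ‖ ≤ AA D b x := by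
  have hne : x ≠ ξ := fun h => hξ (h ▸ hx)
  have hnorm : 0 < ‖x - ξ‖ := by
    rw [norm_pos_iff, sub_ne_zero]; exact hne
  apply le_csInf (SS_nonempty hDo hx b)
  intro l hl
  have hl1 : 1 ≤ l := SS_subset_Ici hl
  have hsub := ball_subset_of_SS hDo hDconv hDb hρ hball hl
  have hout : ξ ∉ Metric.ball x (ρ / l) := fun hmem => hξ (hsub hmem)
  simp only [Metric.mem_ball, dist_eq_norm, not_lt] at hout
  rw [div_le_iff₀ hnorm]
  rw [norm_sub_rev] at hout
  calc ρ = (ρ / l) * l := by field_simp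
    _ ≤ ‖x - ξ‖ * l := by
        apply mul_le_mul_of_nonneg_right ?_ (by linarith)
        exact hout
    _ = l * ‖x - ξ‖ := by ring

theorem AA_xi_upper (hDo : IsOpen D) (hDconv : Convex ℝ D) (hDb : Bornology.IsBounded D)
    {b x ξ : Fin N → ℝ} {ρ : ℝ} (hρ : 0 < ρ) (hball : Metric.ball b ρ ⊆ D)
    (hx : x ∈ D) (hξD : ξ ∈ closure D) (hne : x ≠ ξ) :
    AA D ξ x ≤ 1 + ‖x - ξ‖ * AA D b x / ρ := by
  set L := AA D b x with hLdef
  have hLmem : L ∈ SS D b x := AA_mem (SS_nonempty hDo hx b)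
  have hL1 : 1 ≤ L := SS_subset_Ici hLmem
  have hLpos : 0 < L := by linarith
  have hnorm : 0 < ‖x - ξ‖ := by rw [norm_pos_iff, sub_ne_zero]; exact hne
  -- the pushed point z lies in the closure of D
  set z := x + ((ρ / (L * ‖x - ξ‖)) • (x - ξ)) with hzdef
  have hz : z ∈ closure D := by
    have hsub := ball_subset_of_SS hDo hDconv hDb hρ hball hLmem
    have hz2 : z ∈ Metric.closedBall x (ρ / L) := by
      simp only [Metric.mem_closedBall, dist_eq_norm, hzdef]
      rw [show x + ((ρ / (L * ‖x - ξ‖)) • (x - ξ)) - x = (ρ / (L * ‖x - ξ‖)) • (x - ξ) by abel]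
      rw [norm_smul, Real.norm_eq_abs, abs_of_pos (by positivity)]
      have : ρ / (L * ‖x - ξ‖) * ‖x - ξ‖ = ρ / L := by field_simp
      rw [this]
    rw [← closure_ball x (show (ρ/L) ≠ 0 by positivity)] at hz2
    exact closure_mono hsub hz2
  set l₀ := 1 + ‖x - ξ‖ * L / ρ with hl0def
  have hl0m : l₀ - 1 = ‖x - ξ‖ * L / ρ := by simp [hl0def]
  have hl0pos : 0 < l₀ - 1 := by rw [hl0m]; positivity
  apply AA_le
  rw [mem_SS_iff]
  refine ⟨by linarith, ?_⟩
  have hkey : ((l₀ • x - ξ, l₀ - 1) : (Fin N → ℝ) × ℝ) = (((l₀ - 1) • z, l₀ - 1)) := by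
    refine Prod.ext ?_ rfl
    show l₀ • x - ξ = (l₀ - 1) • z
    rw [hzdef, smul_add, smul_smul]
    have : (l₀ - 1) * (ρ / (L * ‖x - ξ‖)) = 1 := by
      rw [hl0m, mul_comm ‖x - ξ‖ L]; field_simp
    rw [this, one_smul]
    module
  rw [hkey]
  exact mem_clC_of hz hl0pos

theorem smul_pair_identity {E : Type*} [AddCommGroup E] [Module ℝ E] {c : ℝ} (hc : c ≠ 0)
    (v w : E) : c⁻¹ • v - w = c⁻¹ • (v - c • w) := by
  rw [smul_sub, smul_smul, inv_mul_cancel₀ hc, one_smul]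

theorem AA_b_radial (hDconv : Convex ℝ D) {b ξ : Fin N → ℝ} (hξ : ξ ∈ closure D)
    {t : ℝ} (ht0 : 0 < t) (ht1 : t < 1) : AA D b (b + t • (ξ - b)) ≤ (1 - t)⁻¹ := by
  apply AA_le
  have h1mt : (0:ℝ) < 1 - t := by linarith
  refine ⟨by positivity, ?_⟩
  have hkey : (1-t)⁻¹ • ((b + t • (ξ - b), (1:ℝ)) : (Fin N → ℝ) × ℝ) - (b, (1:ℝ))
      = (1-t)⁻¹ • ((t • ξ, t) : (Fin N → ℝ) × ℝ) := by
    rw [smul_pair_identity h1mt.ne']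
    congr 1
    refine Prod.ext ?_ (by simp)
    show b + t • (ξ - b) - (1-t) • b = t • ξ
    module
  rw [hkey]
  exact clC_smul (by positivity : (0:ℝ) < (1-t)⁻¹) (mem_clC_of hξ ht0)

theorem AA_xi_radial {b ξ : Fin N → ℝ} (hb : b ∈ closure D)
    {t : ℝ} (ht0 : 0 < t) (ht1 : t < 1) : AA D ξ (b + t • (ξ - b)) ≤ t⁻¹ := by
  apply AA_le
  have h1mt : (0:ℝ) < 1 - t := by linarith
  refine ⟨by positivity, ?_⟩
  have hkey : t⁻¹ • ((b + t • (ξ - b), (1:ℝ)) : (Fin N → ℝ) × ℝ) - (ξ, (1:ℝ))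
      = t⁻¹ • (((1-t) • b, 1-t) : (Fin N → ℝ) × ℝ) := by
    rw [smul_pair_identity ht0.ne']
    congr 1
    refine Prod.ext ?_ (by simp)
    show b + t • (ξ - b) - t • ξ = (1-t) • b
    module
  rw [hkey]
  exact clC_smul (by positivity : (0:ℝ) < t⁻¹) (mem_clC_of hb h1mt)

theorem SS_upward (hDconv : Convex ℝ D) {x y : Fin N → ℝ} (hy : y ∈ closure D)
    {l l' : ℝ} (hl : l ∈ SS D x y) (hll' : l ≤ l') : l' ∈ SS D x y := by
  rcases eq_or_lt_of_le hll' with rfl | hlt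
  · exact hl
  refine ⟨lt_trans hl.1 hlt, ?_⟩
  have hkey : l' • ((y, (1:ℝ)) : (Fin N → ℝ) × ℝ) - (x, (1:ℝ))
      = (l • ((y, (1:ℝ)) : (Fin N → ℝ) × ℝ) - (x, (1:ℝ))) + ((l' - l) • y, l' - l) := by
    refine Prod.ext ?_ (by simp)
    show l' • y - x = (l • y - x) + (l' - l) • y
    module
  rw [hkey]
  exact clC_add hDconv hl.2 (mem_clC_of hy (by linarith))
/-! ### No interior cluster point -/

theorem hil_tendsto (hDo : IsOpen D) (hDconv : Convex ℝ D) {v p : Fin N → ℝ}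
    (hv : v ∈ D) (hp : p ∈ D) {x : ℕ → Fin N → ℝ} (hx : ∀ k, x k ∈ D)
    (hlim : Tendsto x atTop (𝓝 p)) :
    Tendsto (fun k => hilOn D v (x k)) atTop (𝓝 (hilOn D v p)) := by
  simp only [hilOn_eq']
  refine Tendsto.add ?_ ?_
  · exact log_AA_snd_tendsto hDo hDconv hv hp hx hlim
  · exact (AA_fst_tendsto hDo hDconv hv hlim).log (AA_pos (SS_nonempty hDo hv p)).ne'

theorem no_interior_limit (hDo : IsOpen D) (hDconv : Convex ℝ D)
    {b : Fin N → ℝ} (hb : b ∈ D) {xs : ℕ → Fin N → ℝ} (hxs : ∀ n, xs n ∈ D)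
    {h : (Fin N → ℝ) → ℝ}
    (hconv : ∀ u ∈ D, Tendsto (fun n => hilOn D u (xs n) - hilOn D b (xs n)) atTop (𝓝 (h u)))
    {p : Fin N → ℝ} (hp : p ∈ D) {σ : ℕ → ℕ} (hσ : Tendsto σ atTop atTop)
    (hlim : Tendsto (fun k => xs (σ k)) atTop (𝓝 p)) :
    ∀ u ∈ D, h u = hilOn D u p - hilOn D b p := by
  intro u hu
  have hxsk : ∀ k, xs (σ k) ∈ D := fun k => hxs (σ k)
  have hT1 : Tendsto (fun k => hilOn D u (xs (σ k)) - hilOn D b (xs (σ k))) atTop (𝓝 (h u)) :=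
    (hconv u hu).comp hσ
  have hT2 : Tendsto (fun k => hilOn D u (xs (σ k)) - hilOn D b (xs (σ k))) atTop
      (𝓝 (hilOn D u p - hilOn D b p)) :=
    (hil_tendsto hDo hDconv hu hp hxsk hlim).sub (hil_tendsto hDo hDconv hb hp hxsk hlim)
  exact tendsto_nhds_unique hT1 hT2

/-! ### No two boundary cluster points -/

theorem no_two_boundary_limits (hDo : IsOpen D) (hDconv : Convex ℝ D)
    (hDb : Bornology.IsBounded D) {b : Fin N → ℝ} (hb : b ∈ D)
    {xs : ℕ → Fin N → ℝ} (hxs : ∀ n, xs n ∈ D) {h : (Fin N → ℝ) → ℝ}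
    (hconv : ∀ u ∈ D, Tendsto (fun n => hilOn D u (xs n) - hilOn D b (xs n)) atTop (𝓝 (h u)))
    {ξ η : Fin N → ℝ} (hξcl : ξ ∈ closure D) (hξD : ξ ∉ D)
    (hηcl : η ∈ closure D) (hηD : η ∉ D) (hne : ξ ≠ η)
    (hAle : AA D η b ≤ AA D ξ b)
    {σ τ : ℕ → ℕ} (hσ : Tendsto σ atTop atTop) (hτ : Tendsto τ atTop atTop)
    (hlσ : Tendsto (fun k => xs (σ k)) atTop (𝓝 ξ))
    (hlτ : Tendsto (fun k => xs (τ k)) atTop (𝓝 η)) :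
    False := by
  obtain ⟨ρ, hρ, hball⟩ := Metric.isOpen_iff.mp hDo b hb
  -- radial points are interior
  have huD : ∀ t : ℝ, 0 < t → t < 1 → b + t • (ξ - b) ∈ D := by
    intro t ht0 ht1
    have hcombo : b + t • (ξ - b) = (1 - t) • b + t • ξ := by module
    rw [hcombo]
    have := hDconv.combo_interior_closure_mem_interior (a := 1 - t) (b := t)
      (by rwa [hDo.interior_eq]) hξcl (by linarith) ht0.le (by ring)
    rwa [hDo.interior_eq] at this
  -- the Funk-part limits
  have funkLim : ∀ (s : ℕ → ℕ), Tendsto s atTop atTop → ∀ (q : Fin N → ℝ), q ∈ closure D →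
      Tendsto (fun k => xs (s k)) atTop (𝓝 q) → ∀ v ∈ D,
      Tendsto (fun k => Real.log (AA D v (xs (s k))) - Real.log (AA D b (xs (s k)))) atTop
        (𝓝 (h v - (Real.log (AA D q v) - Real.log (AA D q b)))) := by
    intro s hs q hqcl hql v hv
    have hT1 : Tendsto (fun k => hilOn D v (xs (s k)) - hilOn D b (xs (s k))) atTop (𝓝 (h v)) :=
      (hconv v hv).comp hs
    have hT2 : Tendsto (fun k => Real.log (AA D (xs (s k)) v) - Real.log (AA D (xs (s k)) b))
        atTop (𝓝 (Real.log (AA D q v) - Real.log (AA D q b))) :=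
      ((AA_fst_tendsto hDo hDconv hv hql).log (AA_pos (SS_nonempty hDo hv q)).ne').sub
        ((AA_fst_tendsto hDo hDconv hb hql).log (AA_pos (SS_nonempty hDo hb q)).ne')
    refine (hT1.sub hT2).congr (fun k => ?_)
    simp only [hilOn_eq']
    ring
  -- key bound: AA D η u_t ≤ t⁻¹ for all t ∈ (0,1)
  have key : ∀ t : ℝ, 0 < t → t < 1 → AA D η (b + t • (ξ - b)) ≤ t⁻¹ := by
    intro t ht0 ht1
    have h1mt : (0:ℝ) < 1 - t := by linarith
    set u := b + t • (ξ - b) with hudef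
    have huD' : u ∈ D := huD t ht0 ht1
    -- upper bound on the ξ-side Funk limit
    have hup : h u - (Real.log (AA D ξ u) - Real.log (AA D ξ b)) ≤ Real.log (1 - t) := by
      have TU := funkLim σ hσ ξ hξcl hlσ u huD'
      set r : ℕ → ℝ := fun k => AA D ξ (xs (σ k)) / AA D b (xs (σ k)) with hrdef
      have hAb : ∀ k, 1 ≤ AA D b (xs (σ k)) :=
        fun k => one_le_AA (SS_nonempty hDo (hxs (σ k)) b)
      have hAξ : ∀ k, 1 ≤ AA D ξ (xs (σ k)) :=
        fun k => one_le_AA (SS_nonempty hDo (hxs (σ k)) ξ)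
      have hAbp : ∀ k, 0 < AA D b (xs (σ k)) := fun k => lt_of_lt_of_le one_pos (hAb k)
      have hAξp : ∀ k, 0 < AA D ξ (xs (σ k)) := fun k => lt_of_lt_of_le one_pos (hAξ k)
      have hrnn : ∀ k, 0 ≤ r k := fun k => div_nonneg (hAξp k).le (hAbp k).le
      have hnormpos : ∀ k, 0 < ‖xs (σ k) - ξ‖ := by
        intro k
        rw [norm_pos_iff, sub_ne_zero]
        exact fun hc => hξD (hc ▸ hxs (σ k))
      have hrup : ∀ k, r k ≤ 2 * ‖xs (σ k) - ξ‖ / ρ := by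
        intro k
        have hn := hnormpos k
        have hupper := AA_xi_upper hDo hDconv hDb hρ hball (hxs (σ k)) hξcl
          (fun hc => hξD (hc ▸ hxs (σ k)))
        have hlower := AA_lower hDo hDconv hDb hρ hball (hxs (σ k)) hξD
        have hlower' : ρ ≤ ‖xs (σ k) - ξ‖ * AA D b (xs (σ k)) := by
          rw [div_le_iff₀ hn] at hlower
          linarith
        have hupper' : AA D ξ (xs (σ k)) * ρ ≤ ρ + ‖xs (σ k) - ξ‖ * AA D b (xs (σ k)) := by
          have h2 := mul_le_mul_of_nonneg_right hupper hρ.le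
          calc AA D ξ (xs (σ k)) * ρ
              ≤ (1 + ‖xs (σ k) - ξ‖ * AA D b (xs (σ k)) / ρ) * ρ := h2
            _ = ρ + ‖xs (σ k) - ξ‖ * AA D b (xs (σ k)) := by field_simp
        show AA D ξ (xs (σ k)) / AA D b (xs (σ k)) ≤ 2 * ‖xs (σ k) - ξ‖ / ρ
        rw [div_le_div_iff₀ (hAbp k) hρ]
        nlinarith [hlower', hupper']
      -- ratio tends to zero
      have hn2 : Tendsto (fun k => ‖xs (σ k) - ξ‖) atTop (𝓝 0) := by
        have h3 : Tendsto (fun k => xs (σ k) - ξ) atTop (𝓝 (ξ - ξ)) := hlσ.sub_const ξ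
        rw [sub_self] at h3
        simpa using h3.norm
      have hupperlim : Tendsto (fun k => 2 * ‖xs (σ k) - ξ‖ / ρ) atTop (𝓝 0) := by
        have := (hn2.const_mul 2).div_const ρ
        simpa using this
      have hr : Tendsto r atTop (𝓝 0) :=
        tendsto_of_tendsto_of_tendsto_of_le_of_le tendsto_const_nhds hupperlim hrnn hrup
      -- logarithm of the bound tends to log (1 - t)
      have hBlim : Tendsto (fun k => (1 - t) + t * r k) atTop (𝓝 (1 - t)) := by
        have h9 := (hr.const_mul t).const_add (1 - t)
        simpa using h9
      have hBlog : Tendsto (fun k => Real.log ((1 - t) + t * r k)) atTop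
          (𝓝 (Real.log (1 - t))) := hBlim.log h1mt.ne'
      refine le_of_tendsto_of_tendsto' TU hBlog (fun k => ?_)
      -- pointwise bound
      have hxkD := hxs (σ k)
      have hcombo : AA D u (xs (σ k))
          ≤ (1 - t) * AA D b (xs (σ k)) + t * AA D ξ (xs (σ k)) := by
        have h4 := AA_combo hDo hDconv hxkD (a := 1 - t) (c := t) (x := b) (x' := ξ)
          h1mt.le ht0.le (by ring)
        have h5 : (1 - t) • b + t • ξ = u := by rw [hudef]; module
        rwa [h5] at h4
      have hrpos2 : 0 < (1 - t) + t * r k := by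
        have := mul_nonneg ht0.le (hrnn k)
        linarith
      have heq : (1 - t) * AA D b (xs (σ k)) + t * AA D ξ (xs (σ k))
          = AA D b (xs (σ k)) * ((1 - t) + t * r k) := by
        have hAne : AA D b (xs (σ k)) ≠ 0 := (hAbp k).ne'
        simp only [hrdef]
        field_simp
      have h6 : Real.log (AA D u (xs (σ k)))
          ≤ Real.log (AA D b (xs (σ k))) + Real.log ((1 - t) + t * r k) := by
        calc Real.log (AA D u (xs (σ k)))
            ≤ Real.log (AA D b (xs (σ k)) * ((1 - t) + t * r k)) := by
              rw [← heq]
              exact Real.log_le_log (AA_pos (SS_nonempty hDo hxkD u)) hcombo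
          _ = _ := Real.log_mul (hAbp k).ne' hrpos2.ne'
      show Real.log (AA D u (xs (σ k))) - Real.log (AA D b (xs (σ k)))
          ≤ Real.log ((1 - t) + t * r k)
      linarith
    -- lower bound on the η-side Funk limit
    have hlo : Real.log (1 - t) ≤ h u - (Real.log (AA D η u) - Real.log (AA D η b)) := by
      have TL := funkLim τ hτ η hηcl hlτ u huD'
      refine ge_of_tendsto' TL (fun k => ?_)
      have hxkD := hxs (τ k)
      have htri : AA D b (xs (τ k)) ≤ AA D b u * AA D u (xs (τ k)) :=
        AA_triangle hDo hDconv huD' hxkD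
      have hrad : AA D b u ≤ (1 - t)⁻¹ := AA_b_radial hDconv hξcl ht0 ht1
      have hAu : 0 < AA D u (xs (τ k)) := AA_pos (SS_nonempty hDo hxkD u)
      have hAb : 0 < AA D b (xs (τ k)) := AA_pos (SS_nonempty hDo hxkD b)
      have h1 : AA D b (xs (τ k)) ≤ (1 - t)⁻¹ * AA D u (xs (τ k)) :=
        htri.trans (mul_le_mul_of_nonneg_right hrad hAu.le)
      have h2 : (1 - t) * AA D b (xs (τ k)) ≤ AA D u (xs (τ k)) := by
        have h3 := mul_le_mul_of_nonneg_left h1 h1mt.le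
        rwa [← mul_assoc, mul_inv_cancel₀ h1mt.ne', one_mul] at h3
      have h4 : Real.log ((1 - t) * AA D b (xs (τ k))) ≤ Real.log (AA D u (xs (τ k))) :=
        Real.log_le_log (by positivity) h2
      rw [Real.log_mul h1mt.ne' hAb.ne'] at h4
      show Real.log (1 - t)
          ≤ Real.log (AA D u (xs (τ k))) - Real.log (AA D b (xs (τ k)))
      linarith
    -- combine
    have h5 : Real.log (AA D ξ u) ≤ Real.log t⁻¹ :=
      Real.log_le_log (AA_pos (SS_nonempty hDo huD' ξ))
        (AA_xi_radial (subset_closure hb) ht0 ht1)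
    have h6 : Real.log (AA D η b) ≤ Real.log (AA D ξ b) :=
      Real.log_le_log (AA_pos (SS_nonempty hDo hb η)) hAle
    have h7 : Real.log (AA D η u) ≤ Real.log t⁻¹ := by linarith
    exact (Real.log_le_log_iff (AA_pos (SS_nonempty hDo huD' η)) (by positivity)).mp h7
  -- Endgame: the ray from η through ξ stays in the closure, contradicting boundedness
  obtain ⟨M, hM⟩ := hDb.closure.exists_norm_le
  have hMnn : 0 ≤ M := (norm_nonneg ξ).trans (hM ξ hξcl)
  have hc : 0 < ‖ξ - η‖ := by rw [norm_pos_iff, sub_ne_zero]; exact hne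
  set R := (2 * M + 1) / ‖ξ - η‖ with hRdef
  have hR : 0 < R := by positivity
  set ν := R / (R + 1) with hνdef
  have hν0 : 0 < ν := by positivity
  have hν1 : ν < 1 := by rw [hνdef, div_lt_one (by positivity)]; linarith
  have hmem : ((ξ, (1:ℝ)) : (Fin N → ℝ) × ℝ) - ν • ((η, (1:ℝ)) : (Fin N → ℝ) × ℝ)
      ∈ closure (coneOver D) := by
    set tj : ℕ → ℝ := fun j => 1 - (1 - ν) / (j + 2) with htjdef
    have htjfrac : ∀ j : ℕ, 0 < (1 - ν) / ((j:ℝ) + 2) := by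
      intro j
      have : (0:ℝ) < 1 - ν := by linarith
      positivity
    have htjfrac2 : ∀ j : ℕ, (1 - ν) / ((j:ℝ) + 2) < 1 - ν := by
      intro j
      rw [div_lt_iff₀ (by positivity : (0:ℝ) < (j:ℝ) + 2)]
      have h1 : (0:ℝ) < 1 - ν := by linarith
      nlinarith
    have htjν : ∀ j, ν < tj j := by
      intro j
      have := htjfrac2 j
      simp only [htjdef]
      linarith
    have htj1 : ∀ j, tj j < 1 := by
      intro j
      have := htjfrac j
      simp only [htjdef]
      linarith
    have htjpos : ∀ j, 0 < tj j := fun j => lt_trans hν0 (htjν j)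
    have hmemj : ∀ j, ((b + tj j • (ξ - b), (1:ℝ)) : (Fin N → ℝ) × ℝ)
        - ν • ((η, (1:ℝ)) : (Fin N → ℝ) × ℝ) ∈ closure (coneOver D) := by
      intro j
      have hujD : b + tj j • (ξ - b) ∈ D := huD (tj j) (htjpos j) (htj1 j)
      have hAmem : AA D η (b + tj j • (ξ - b)) ∈ SS D η (b + tj j • (ξ - b)) :=
        AA_mem (SS_nonempty hDo hujD η)
      have hij : AA D η (b + tj j • (ξ - b)) ≤ ν⁻¹ := by
        have h1 := key (tj j) (htjpos j) (htj1 j)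
        have h2 : (tj j)⁻¹ ≤ ν⁻¹ := by
          apply inv_anti₀ hν0 (htjν j).le
        linarith
      have hSS : ν⁻¹ ∈ SS D η (b + tj j • (ξ - b)) :=
        SS_upward hDconv (subset_closure hujD) hAmem hij
      have h2 := hSS.2
      rw [smul_pair_identity hν0.ne'] at h2
      have h3 := clC_smul hν0 h2
      rwa [smul_smul, mul_inv_cancel₀ hν0.ne', one_smul] at h3
    have htjlim : Tendsto tj atTop (𝓝 1) := by
      have h1 : Tendsto (fun j : ℕ => ((j:ℝ) + 2)) atTop atTop :=
        tendsto_atTop_add_const_right _ 2 tendsto_natCast_atTop_atTop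
      have h2 : Tendsto (fun j : ℕ => (1 - ν) / ((j:ℝ) + 2)) atTop (𝓝 0) := by
        have := h1.inv_tendsto_atTop
        have h3 := this.const_mul (1 - ν)
        simp only [mul_zero] at h3
        refine h3.congr (fun j => ?_)
        simp [Pi.inv_apply, div_eq_mul_inv]
      have h4 := h2.const_sub 1
      simp only [sub_zero] at h4
      exact h4
    have hujlim : Tendsto (fun j => b + tj j • (ξ - b)) atTop (𝓝 ξ) := by
      have h1 := (htjlim.smul_const (ξ - b)).const_add b
      have h2 : b + (1:ℝ) • (ξ - b) = ξ := by module
      rwa [h2] at h1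
    have hF : Continuous (fun y : Fin N → ℝ =>
        ((y, (1:ℝ)) : (Fin N → ℝ) × ℝ) - ν • ((η, (1:ℝ)) : (Fin N → ℝ) × ℝ)) := by
      fun_prop
    have hptlim := (hF.tendsto ξ).comp hujlim
    exact isClosed_closure.mem_of_tendsto hptlim (Eventually.of_forall hmemj)
  -- extract the far-away point of the closure
  have hpair : ((ξ, (1:ℝ)) : (Fin N → ℝ) × ℝ) - ν • ((η, (1:ℝ)) : (Fin N → ℝ) × ℝ)
      = ((ξ - ν • η, 1 - ν) : (Fin N → ℝ) × ℝ) := by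
    refine Prod.ext rfl (by simp)
  rw [hpair] at hmem
  have hw : (1 - ν)⁻¹ • (ξ - ν • η) ∈ closure D := by
    have := clC_cross hmem (by simp only []; linarith : (0:ℝ) < ((ξ - ν • η, 1 - ν) :
      (Fin N → ℝ) × ℝ).2)
    simpa using this
  have h1mν : (0:ℝ) < 1 - ν := by linarith
  have hweq : (1 - ν)⁻¹ • (ξ - ν • η) = ξ + (ν / (1 - ν)) • (ξ - η) := by
    have h1 : ξ - ν • η = (1 - ν) • (ξ + (ν / (1 - ν)) • (ξ - η)) := by
      rw [smul_add, smul_smul]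
      have h2 : (1 - ν) * (ν / (1 - ν)) = ν := by field_simp
      rw [h2]
      module
    rw [h1, smul_smul, inv_mul_cancel₀ h1mν.ne', one_smul]
  have hνR : ν / (1 - ν) = R := by
    rw [hνdef]
    have hR1 : (0:ℝ) < R + 1 := by positivity
    field_simp
    ring
  have hRnorm : R * ‖ξ - η‖ = 2 * M + 1 := by
    rw [hRdef]
    field_simp
  have hwM : ‖(1 - ν)⁻¹ • (ξ - ν • η)‖ ≤ M := hM _ hw
  rw [hweq, hνR] at hwM
  have hlast : ‖R • (ξ - η)‖ ≤ ‖ξ + R • (ξ - η)‖ + ‖ξ‖ := by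
    calc ‖R • (ξ - η)‖ = ‖(ξ + R • (ξ - η)) - ξ‖ := by congr 1; abel
      _ ≤ ‖ξ + R • (ξ - η)‖ + ‖ξ‖ := norm_sub_le _ _
  have hnorms : ‖R • (ξ - η)‖ = R * ‖ξ - η‖ := by
    rw [norm_smul, Real.norm_eq_abs, abs_of_pos hR]
  have hξM : ‖ξ‖ ≤ M := hM ξ hξcl
  rw [hnorms, hRnorm] at hlast
  linarith


end HilAux

open HilAux

/-- if a sequence in a bounded open convex domain `D` converges to a point
of the horofunction boundary of the Hilbert geometry, then it converges in the usual
sense to a point of the Euclidean boundary of `D`. -/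
theorem hilbert_horofunction_convergence (N : ℕ) (D : Set (Fin N → ℝ))
    (hDo : IsOpen D) (hDconv : Convex ℝ D) (hDb : Bornology.IsBounded D)
    (b : Fin N → ℝ) (hb : b ∈ D)
    (xs : ℕ → (Fin N → ℝ)) (hxs : ∀ n, xs n ∈ D) (h : (Fin N → ℝ) → ℝ)
    (hconv : ∀ u ∈ D, Tendsto (fun n => hilOn D u (xs n) - hilOn D b (xs n)) atTop (𝓝 (h u)))
    (hhoro : ¬ ∃ p ∈ D, ∀ u ∈ D, h u = hilOn D u p - hilOn D b p) :
    ∃ x ∈ frontier D, Tendsto xs atTop (𝓝 x) := by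
  have hcls : IsCompact (closure D) := hDb.isCompact_closure
  have hmemcl : ∀ n, xs n ∈ closure D := fun n => subset_closure (hxs n)
  obtain ⟨x₀, hx₀cl, φ₀, hφ₀, hlim₀⟩ := hcls.tendsto_subseq hmemcl
  have hlim₀' : Tendsto (fun k => xs (φ₀ k)) atTop (𝓝 x₀) := hlim₀
  -- cluster points of the sequence
  set Cl : (Fin N → ℝ) → Prop := fun p =>
    ∃ σ : ℕ → ℕ, Tendsto σ atTop atTop ∧ Tendsto (fun k => xs (σ k)) atTop (𝓝 p) with hCldef
  have hCl₀ : Cl x₀ := ⟨φ₀, hφ₀.tendsto_atTop, hlim₀'⟩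
  have hnotD : ∀ p, Cl p → p ∉ D := by
    rintro p ⟨σ, h1, h2⟩ hpD
    exact hhoro ⟨p, hpD, no_interior_limit hDo hDconv hb hxs hconv hpD h1 h2⟩
  have huniq : ∀ p, p ∈ closure D → Cl p → p = x₀ := by
    rintro p hpcl hClp
    obtain ⟨σ, h1, h2⟩ := hClp
    by_contra hnep
    rcases le_total (AA D p b) (AA D x₀ b) with hle | hle
    · exact no_two_boundary_limits hDo hDconv hDb hb hxs hconv hx₀cl (hnotD _ hCl₀)
        hpcl (hnotD _ ⟨σ, h1, h2⟩) (fun hc => hnep hc.symm) hle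
        hφ₀.tendsto_atTop h1 hlim₀' h2
    · exact no_two_boundary_limits hDo hDconv hDb hb hxs hconv hpcl (hnotD _ ⟨σ, h1, h2⟩)
        hx₀cl (hnotD _ hCl₀) hnep hle h1 hφ₀.tendsto_atTop h2 hlim₀'
  refine ⟨x₀, ?_, ?_⟩
  · rw [hDo.frontier_eq]
    exact ⟨hx₀cl, hnotD _ hCl₀⟩
  · apply tendsto_of_subseq_tendsto
    intro ns hns
    obtain ⟨q, hqcl, ms, hms, hlimq⟩ := hcls.tendsto_subseq (fun n => hmemcl (ns n))
    have hlimq' : Tendsto (fun k => xs (ns (ms k))) atTop (𝓝 q) := hlimq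
    refine ⟨ms, ?_⟩
    have hq : Cl q := ⟨ns ∘ ms, hns.comp hms.tendsto_atTop, hlimq'⟩
    rw [← huniq q hqcl hq]
    exact hlimq'
end

section
/- Let C be an open convex cone containing no lines, and let x, y lie on distinct rays of ∂C∖{0}. Then the sets B(x) and B(y) of Hilbert-geometry Busemann points associated with x and y are disjoint; that is, no Hilbert Busemann point arises both as a limit of an almost-geodesic converging (in the usual sense) to x and as a limit of an almost-geodesic converging to y. -/
open Set Filter Topology Pointwise

set_option linter.unusedSectionVars false
set_option linter.unusedVariables false
set_option maxHeartbeats 2000000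

variable {V : Type*} [NormedAddCommGroup V] [NormedSpace ℝ V] [FiniteDimensional ℝ V]

/-- A sequence is an almost-geodesic for `d` if, for some `ε > 0`, the sums of consecutive
distances exceed the direct distance by at most `ε`. -/
def AlmostGeod {W : Type*} (d : W → W → ℝ) (x : ℕ → W) : Prop :=
  ∃ ε : ℝ, 0 < ε ∧ ∀ l : ℕ, 1 ≤ l →
    (∑ i ∈ Finset.range l, d (x i) (x (i + 1))) ≤ d (x 0) (x l) + ε

namespace BSD

variable {C : Set V}

lemma smul_memC (hC : IsOpenCone C) {c : ℝ} (hc : 0 < c) {v : V} (hv : v ∈ C) : c • v ∈ C :=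
  hC.2.2.2.1 c hc v hv

lemma add_memC (hC : IsOpenCone C) {u v : V} (hu : u ∈ C) (hv : v ∈ C) : u + v ∈ C := by
  have h2 : (2:ℝ) • ((1/2 : ℝ) • u + (1/2:ℝ) • v) ∈ C :=
    smul_memC hC two_pos (hC.2.2.1 hu hv (by norm_num) (by norm_num) (by norm_num))
  rw [smul_add, smul_smul, smul_smul] at h2
  norm_num at h2
  exact h2

lemma zero_mem_cl (hC : IsOpenCone C) : (0:V) ∈ closure C := by
  obtain ⟨u, hu⟩ := hC.1
  have ht : Tendsto (fun n : ℕ => (1/(n+1) : ℝ) • u) atTop (𝓝 ((0:ℝ) • u)) :=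
    tendsto_one_div_add_atTop_nhds_zero_nat.smul_const u
  rw [zero_smul] at ht
  exact mem_closure_of_tendsto ht (Eventually.of_forall fun n =>
    smul_memC hC (by positivity) hu)

lemma smul_mem_cl (hC : IsOpenCone C) {c : ℝ} (hc : 0 < c) {v : V} (hv : v ∈ closure C) :
    c • v ∈ closure C := by
  obtain ⟨f, hf, hft⟩ := mem_closure_iff_seq_limit.mp hv
  exact mem_closure_of_tendsto (hft.const_smul c)
    (Eventually.of_forall fun n => smul_memC hC hc (hf n))

lemma smul_mem_cl' (hC : IsOpenCone C) {c : ℝ} (hc : 0 ≤ c) {v : V} (hv : v ∈ closure C) :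
    c • v ∈ closure C := by
  rcases hc.lt_or_eq with h | h
  · exact smul_mem_cl hC h hv
  · rw [← h, zero_smul]; exact zero_mem_cl hC

lemma add_mem_cl (hC : IsOpenCone C) {u v : V} (hu : u ∈ closure C) (hv : v ∈ closure C) :
    u + v ∈ closure C := by
  obtain ⟨f, hf, hft⟩ := mem_closure_iff_seq_limit.mp hu
  obtain ⟨g, hg, hgt⟩ := mem_closure_iff_seq_limit.mp hv
  exact mem_closure_of_tendsto (hft.add hgt)
    (Eventually.of_forall fun n => add_memC hC (hf n) (hg n))

/-- A positively homogeneous, cone-monotone, continuous, strictly positive gauge. -/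
noncomputable def psi (C : Set V) (v : V) : ℝ := Metric.infDist v (-(closure C))

lemma neg_cl_nonempty (hC : IsOpenCone C) : (-(closure C)).Nonempty :=
  ⟨0, by simpa using zero_mem_cl hC⟩

lemma psi_nonneg (v : V) : 0 ≤ psi C v := Metric.infDist_nonneg

lemma psi_le (hC : IsOpenCone C) {w : V} (hw : w ∈ closure C) (v : V) :
    psi C v ≤ ‖v + w‖ := by
  have : -w ∈ -(closure C) := by simpa using hw
  simpa [psi, dist_eq_norm, sub_neg_eq_add] using Metric.infDist_le_dist_of_mem this

lemma psi_cont : Continuous (psi C) := Metric.continuous_infDist_pt _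

lemma psi_pos (hC : IsOpenCone C) (hlines : ∀ v : V, v ∈ closure C → -v ∈ closure C → v = 0)
    {v : V} (hv : v ∈ closure C) (hv0 : v ≠ 0) : 0 < psi C v := by
  rcases (psi_nonneg (C := C) v).lt_or_eq with h | h
  · exact h
  · exfalso
    have hcl : IsClosed (-(closure C)) := isClosed_closure.neg
    have : v ∈ -(closure C) :=
      (hcl.mem_iff_infDist_zero (neg_cl_nonempty hC)).2 h.symm
    exact hv0 (hlines v hv (by simpa using this))

lemma psi_mono (hC : IsOpenCone C) {v w : V} (hvw : w - v ∈ closure C) :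
    psi C v ≤ psi C w := by
  by_contra hlt
  push_neg at hlt
  obtain ⟨u, hu, hd⟩ := (Metric.infDist_lt_iff (neg_cl_nonempty hC)).mp hlt
  have hu' : -u ∈ closure C := by simpa using hu
  have : psi C v ≤ ‖v + ((w - v) + -u)‖ := psi_le hC (add_mem_cl hC hvw hu') v
  rw [dist_eq_norm] at hd
  have he : v + ((w - v) + -u) = w - u := by abel
  rw [he] at this
  exact absurd (this.trans_lt hd) (lt_irrefl _)

lemma psi_smul (hC : IsOpenCone C) {c : ℝ} (hc : 0 < c) (v : V) :
    psi C (c • v) = c * psi C v := by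
  have key : ∀ (a : ℝ), 0 < a → ∀ u : V, psi C (a • u) ≤ a * psi C u := by
    intro a ha u
    by_contra hlt
    push_neg at hlt
    have h2 : psi C u < psi C (a • u) / a := by
      rw [lt_div_iff₀ ha]; linarith [hlt]
    obtain ⟨q, hq, hd⟩ := (Metric.infDist_lt_iff (neg_cl_nonempty hC)).mp h2
    have hq' : -q ∈ closure C := by simpa using hq
    have : psi C (a • u) ≤ ‖a • u + a • (-q)‖ := psi_le hC (smul_mem_cl hC ha hq') _
    rw [← smul_add, norm_smul, Real.norm_of_nonneg ha.le] at this
    rw [dist_eq_norm] at hd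
    have : psi C (a • u) < a * (psi C (a • u) / a) := by
      refine this.trans_lt ?_
      have : ‖u + -q‖ < psi C (a • u) / a := by simpa [sub_eq_add_neg] using hd
      exact (mul_lt_mul_iff_right₀ ha).2 this
    rw [mul_div_cancel₀ _ (ne_of_gt ha)] at this
    exact absurd this (lt_irrefl _)
  refine le_antisymm (key c hc v) ?_
  have := key c⁻¹ (by positivity) (c • v)
  rw [inv_smul_smul₀ (ne_of_gt hc)] at this
  calc c * psi C v ≤ c * (c⁻¹ * psi C (c • v)) := by
        exact (mul_le_mul_iff_right₀ hc).2 this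
    _ = psi C (c • v) := by field_simp

lemma funkS_bddBelow (u v : V) : BddBelow {l : ℝ | 0 < l ∧ l • v - u ∈ closure C} :=
  ⟨0, fun l hl => hl.1.le⟩

lemma funkS_upclosed (hC : IsOpenCone C) {u v : V} (hv : v ∈ closure C)
    {l l' : ℝ} (hl : 0 < l ∧ l • v - u ∈ closure C) (hll' : l ≤ l') :
    0 < l' ∧ l' • v - u ∈ closure C := by
  refine ⟨hl.1.trans_le hll', ?_⟩
  have : (l' - l) • v + (l • v - u) ∈ closure C :=
    add_mem_cl hC (smul_mem_cl' hC (by linarith) hv) hl.2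
  have he : (l' - l) • v + (l • v - u) = l' • v - u := by
    rw [sub_smul]; abel
  rwa [he] at this

lemma funkM_le (hC : IsOpenCone C) {u v : V} {l : ℝ} (hl : 0 < l)
    (hmem : l • v - u ∈ closure C) : funkM C u v ≤ l :=
  csInf_le (funkS_bddBelow u v) ⟨hl, hmem⟩

lemma funkS_nonempty (hC : IsOpenCone C) {v : V} (hv : v ∈ C) {ρ : ℝ} (hρ : 0 < ρ)
    (hball : Metric.ball v ρ ⊆ C) {u : V} {R : ℝ} (hR : ‖u‖ ≤ R) (hR0 : 0 ≤ R) :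
    0 < R/ρ + 1 ∧ (R/ρ + 1) • v - u ∈ closure C := by
  have hl : 0 < R/ρ + 1 := by positivity
  refine ⟨hl, ?_⟩
  have hmem : v - (R/ρ+1)⁻¹ • u ∈ C := by
    apply hball
    rw [Metric.mem_ball, dist_eq_norm]
    have he2 : v - (R/ρ+1)⁻¹ • u - v = -((R/ρ+1)⁻¹ • u) := by abel
    rw [he2, norm_neg, norm_smul, Real.norm_of_nonneg (by positivity)]
    calc (R/ρ+1)⁻¹ * ‖u‖ ≤ (R/ρ+1)⁻¹ * R := by
          exact mul_le_mul_of_nonneg_left hR (by positivity)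
      _ < ρ := by
          rw [inv_mul_lt_iff₀ hl]
          have : R/ρ * ρ = R := by field_simp
          nlinarith [hρ]
  have : (R/ρ+1) • (v - (R/ρ+1)⁻¹ • u) ∈ C := smul_memC hC hl hmem
  have he : (R/ρ+1) • (v - (R/ρ+1)⁻¹ • u) = (R/ρ+1) • v - u := by
    rw [smul_sub, smul_inv_smul₀ (ne_of_gt hl)]
  rw [he] at this
  exact subset_closure this

lemma funkM_le_of_norm_le (hC : IsOpenCone C) {v : V} (hv : v ∈ C) {ρ : ℝ} (hρ : 0 < ρ)
    (hball : Metric.ball v ρ ⊆ C) {u : V} {R : ℝ} (hR : ‖u‖ ≤ R) (hR0 : 0 ≤ R) :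
    funkM C u v ≤ R/ρ + 1 := by
  obtain ⟨h1, h2⟩ := funkS_nonempty hC hv hρ hball hR hR0
  exact funkM_le hC h1 h2

lemma funkS_ne (hC : IsOpenCone C) {v : V} (hv : v ∈ C) (u : V) :
    {l : ℝ | 0 < l ∧ l • v - u ∈ closure C}.Nonempty := by
  obtain ⟨ρ, hρ, hball⟩ := Metric.isOpen_iff.mp hC.2.1 v hv
  exact ⟨‖u‖/ρ + 1, funkS_nonempty hC hv hρ hball le_rfl (norm_nonneg u)⟩

lemma psi_div_le_funkM (hC : IsOpenCone C)
    (hlines : ∀ v : V, v ∈ closure C → -v ∈ closure C → v = 0)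
    {u v : V} (hv : v ∈ C) :
    psi C u / psi C v ≤ funkM C u v := by
  have hvcl : v ∈ closure C := subset_closure hv
  have hv0 : v ≠ 0 := fun h => hC.2.2.2.2 (h ▸ hv)
  have hψv : 0 < psi C v := psi_pos hC hlines hvcl hv0
  refine le_csInf (funkS_ne hC hv u) ?_
  rintro l ⟨hl, hmem⟩
  rw [div_le_iff₀ hψv]
  have hh : psi C u ≤ psi C (l • v) := psi_mono hC hmem
  rw [psi_smul hC hl] at hh; linarith

lemma funkM_pos (hC : IsOpenCone C)
    (hlines : ∀ v : V, v ∈ closure C → -v ∈ closure C → v = 0)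
    {u v : V} (hu : u ∈ closure C) (hu0 : u ≠ 0) (hv : v ∈ C) :
    0 < funkM C u v := by
  have hvcl : v ∈ closure C := subset_closure hv
  have hv0 : v ≠ 0 := fun h => hC.2.2.2.2 (h ▸ hv)
  have := psi_div_le_funkM hC hlines (u := u) hv
  have h1 : 0 < psi C u / psi C v :=
    div_pos (psi_pos hC hlines hu hu0) (psi_pos hC hlines hvcl hv0)
  linarith

lemma funkM_mem (hC : IsOpenCone C) {u v : V} (hv : v ∈ C) :
    (funkM C u v) • v - u ∈ closure C := by
  set S := {l : ℝ | 0 < l ∧ l • v - u ∈ closure C} with hS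
  have hne := funkS_ne hC hv u
  have hbdd := funkS_bddBelow (C := C) u v
  have hmem : ∀ n : ℕ, ((sInf S + 1/(n+1)) : ℝ) • v - u ∈ closure C := by
    intro n
    have hlt : sInf S < sInf S + 1/(n+1) := by
      have : (0:ℝ) < 1/(n+1) := by positivity
      linarith
    obtain ⟨l, hl, hl'⟩ := exists_lt_of_csInf_lt hne hlt
    exact (funkS_upclosed hC (subset_closure hv) hl hl'.le).2
  have htend : Tendsto (fun n : ℕ => ((sInf S + 1/(n+1)) : ℝ) • v - u) atTop
      (𝓝 ((sInf S) • v - u)) := by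
    have h1 : Tendsto (fun n : ℕ => (sInf S + 1/(n+1) : ℝ)) atTop (𝓝 (sInf S + 0)) :=
      tendsto_const_nhds.add tendsto_one_div_add_atTop_nhds_zero_nat
    rw [add_zero] at h1
    exact (h1.smul_const v).sub tendsto_const_nhds
  exact isClosed_closure.mem_of_tendsto htend (Eventually.of_forall hmem)

lemma funkM_self (hC : IsOpenCone C)
    (hlines : ∀ v : V, v ∈ closure C → -v ∈ closure C → v = 0)
    {v : V} (hv : v ∈ C) : funkM C v v = 1 := by
  refine le_antisymm (funkM_le hC one_pos (by simp [zero_mem_cl hC])) ?_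
  have := psi_div_le_funkM hC hlines (u := v) hv
  have hv0 : v ≠ 0 := fun h => hC.2.2.2.2 (h ▸ hv)
  have hψ : 0 < psi C v := psi_pos hC hlines (subset_closure hv) hv0
  rwa [div_self (ne_of_gt hψ)] at this

lemma funkM_triangle (hC : IsOpenCone C)
    (hlines : ∀ v : V, v ∈ closure C → -v ∈ closure C → v = 0)
    {u v w : V} (hu : u ∈ C) (hv : v ∈ C) (hw : w ∈ C) :
    funkM C u w ≤ funkM C u v * funkM C v w := by
  have ha := funkM_mem hC hv (u := u)
  have hc := funkM_mem hC hw (u := v)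
  have hapos : 0 < funkM C u v :=
    funkM_pos hC hlines (subset_closure hu) (fun h => hC.2.2.2.2 (h ▸ hu)) hv
  have hcpos : 0 < funkM C v w :=
    funkM_pos hC hlines (subset_closure hv) (fun h => hC.2.2.2.2 (h ▸ hv)) hw
  have hmem : (funkM C u v * funkM C v w) • w - u ∈ closure C := by
    have h1 : (funkM C u v) • ((funkM C v w) • w - v) + ((funkM C u v) • v - u)
        ∈ closure C := add_mem_cl hC (smul_mem_cl hC hapos hc) ha
    have he : (funkM C u v) • ((funkM C v w) • w - v) + ((funkM C u v) • v - u)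
        = (funkM C u v * funkM C v w) • w - u := by
      rw [smul_sub, smul_smul]; abel
    rwa [he] at h1
  exact funkM_le hC (mul_pos hapos hcpos) hmem

lemma hilD_self (hC : IsOpenCone C)
    (hlines : ∀ v : V, v ∈ closure C → -v ∈ closure C → v = 0)
    {v : V} (hv : v ∈ C) : hilD C v v = 0 := by
  simp [hilD, funkF, revF, funkM_self hC hlines hv]

lemma funkF_triangle (hC : IsOpenCone C)
    (hlines : ∀ v : V, v ∈ closure C → -v ∈ closure C → v = 0)
    {u v w : V} (hu : u ∈ C) (hv : v ∈ C) (hw : w ∈ C) :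
    funkF C u w ≤ funkF C u v + funkF C v w := by
  have hapos : 0 < funkM C u v :=
    funkM_pos hC hlines (subset_closure hu) (fun h => hC.2.2.2.2 (h ▸ hu)) hv
  have hcpos : 0 < funkM C v w :=
    funkM_pos hC hlines (subset_closure hv) (fun h => hC.2.2.2.2 (h ▸ hv)) hw
  have hpos : 0 < funkM C u w :=
    funkM_pos hC hlines (subset_closure hu) (fun h => hC.2.2.2.2 (h ▸ hu)) hw
  have h := funkM_triangle hC hlines hu hv hw
  calc funkF C u w = Real.log (funkM C u w) := rfl
    _ ≤ Real.log (funkM C u v * funkM C v w) :=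
        Real.log_le_log hpos h
    _ = funkF C u v + funkF C v w := Real.log_mul (ne_of_gt hapos) (ne_of_gt hcpos)

lemma hilD_triangle (hC : IsOpenCone C)
    (hlines : ∀ v : V, v ∈ closure C → -v ∈ closure C → v = 0)
    {u v w : V} (hu : u ∈ C) (hv : v ∈ C) (hw : w ∈ C) :
    hilD C u w ≤ hilD C u v + hilD C v w := by
  have h1 := funkF_triangle hC hlines hu hv hw
  have h2 := funkF_triangle hC hlines hw hv hu
  have e1 : revF C u w = funkF C w u := rfl
  have e2 : revF C u v = funkF C v u := rfl
  have e3 : revF C v w = funkF C w v := rfl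
  simp only [hilD, e1, e2, e3]
  linarith

section Seq

variable (hC : IsOpenCone C)
    (hlines : ∀ v : V, v ∈ closure C → -v ∈ closure C → v = 0)
    {b : V} (hb : b ∈ C) {h : V → ℝ} {ws : ℕ → V}
    (hwsC : ∀ n, ws n ∈ C)
    (hlim : ∀ u ∈ C, Tendsto (fun n => hilD C u (ws n) - hilD C b (ws n)) atTop (𝓝 (h u)))

include hC hlines hb hwsC hlim

/-- 1-Lipschitz-type property of the horofunction. -/
lemma h_lip {u w : V} (huC : u ∈ C) (hwC : w ∈ C) :
    h u ≤ hilD C u w + h w := by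
  have key : ∀ n, hilD C u (ws n) - hilD C b (ws n) ≤
      hilD C u w + (hilD C w (ws n) - hilD C b (ws n)) := by
    intro n
    have := hilD_triangle hC hlines huC hwC (hwsC n)
    linarith
  exact le_of_tendsto_of_tendsto' (hlim u huC) (tendsto_const_nhds.add (hlim w hwC))
    key

/-- Along a Hilbert almost-geodesic converging to `h`, the quantity
`h (ws n) + d(b, ws n)` tends to `0`. -/
lemma alpha_tendsto (hAG : AlmostGeod (hilD C) ws) :
    Tendsto (fun n => h (ws n) + hilD C b (ws n)) atTop (𝓝 0) := by
  obtain ⟨ε, hε, hAGp⟩ := hAG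
  set d : V → V → ℝ := hilD C with hd
  set s : ℕ → ℝ := fun n => ∑ i ∈ Finset.range n, d (ws i) (ws (i+1)) with hs
  set δ : ℕ → ℝ := fun n => s n - d (ws 0) (ws n) with hδ
  have htri : ∀ u v w : V, u ∈ C → v ∈ C → w ∈ C → d u w ≤ d u v + d v w :=
    fun u v w hu hv hw => hilD_triangle hC hlines hu hv hw
  have hδmono : Monotone δ := by
    apply monotone_nat_of_le_succ
    intro n
    have h1 : d (ws 0) (ws (n+1)) ≤ d (ws 0) (ws n) + d (ws n) (ws (n+1)) :=
      htri _ _ _ (hwsC 0) (hwsC n) (hwsC (n+1))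
    have h2 : s (n+1) = s n + d (ws n) (ws (n+1)) := Finset.sum_range_succ _ n
    simp only [hδ]
    rw [h2]; linarith
  have hδub : ∀ n, δ n ≤ ε := by
    intro n
    cases n with
    | zero =>
        have h00 : d (ws 0) (ws 0) = 0 := hilD_self hC hlines (hwsC 0)
        have hs0 : s 0 = 0 := by simp [hs]
        show s 0 - d (ws 0) (ws 0) ≤ ε
        rw [hs0, h00]; linarith
    | succ m =>
        have := hAGp (m+1) (Nat.succ_le_succ (Nat.zero_le m))
        simp only [hδ]; linarith [this]
  set δS : ℝ := ⨆ n, δ n with hδi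
  have hbdd : BddAbove (Set.range δ) := ⟨ε, by rintro r ⟨n, rfl⟩; exact hδub n⟩
  have hδtend : Tendsto δ atTop (𝓝 δS) := tendsto_atTop_ciSup hδmono hbdd
  have hδle : ∀ n, δ n ≤ δS := fun n => le_ciSup hbdd n
  have hchain : ∀ n k, n ≤ k → d (ws n) (ws k) ≤ s k - s n := by
    intro n k hk
    induction k, hk using Nat.le_induction with
    | base =>
        have h00 : d (ws n) (ws n) = 0 := hilD_self hC hlines (hwsC n)
        rw [h00]; simp
    | succ k hk ih =>
        have h1 : d (ws n) (ws (k+1)) ≤ d (ws n) (ws k) + d (ws k) (ws (k+1)) :=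
          htri _ _ _ (hwsC n) (hwsC k) (hwsC (k+1))
        have h2 : s (k+1) = s k + d (ws k) (ws (k+1)) := Finset.sum_range_succ _ k
        rw [h2]; linarith
  -- upper bound for h (ws n)
  have hupper : ∀ n, h (ws n) ≤ h (ws 0) - d (ws 0) (ws n) + (δS - δ n) := by
    intro n
    have key : ∀ k, n ≤ k → d (ws n) (ws k) - d b (ws k) ≤
        (d (ws 0) (ws k) - d b (ws k)) + (δS - δ n) - d (ws 0) (ws n) := by
      intro k hk
      have h1 := hchain n k hk
      have h2 : s k - s n = (d (ws 0) (ws k) + δ k) - (d (ws 0) (ws n) + δ n) := by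
        simp only [hδ]; ring
      have h3 := hδle k
      linarith
    have ht1 : Tendsto (fun k => d (ws n) (ws k) - d b (ws k)) atTop (𝓝 (h (ws n))) :=
      hlim _ (hwsC n)
    have ht2 : Tendsto (fun k => (d (ws 0) (ws k) - d b (ws k)) + (δS - δ n)
        - d (ws 0) (ws n)) atTop
        (𝓝 (h (ws 0) + (δS - δ n) - d (ws 0) (ws n))) :=
      ((hlim _ (hwsC 0)).add tendsto_const_nhds).sub tendsto_const_nhds
    have hev : (fun k => d (ws n) (ws k) - d b (ws k)) ≤ᶠ[atTop]
        (fun k => (d (ws 0) (ws k) - d b (ws k)) + (δS - δ n) - d (ws 0) (ws n)) :=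
      Filter.eventually_atTop.2 ⟨n, key⟩
    have := le_of_tendsto_of_tendsto ht1 ht2 hev
    linarith
  -- lower bound for h (ws n)
  have hlower : ∀ n, -(d b (ws n)) ≤ h (ws n) := by
    intro n
    have key : ∀ k, -(d b (ws n)) ≤ d (ws n) (ws k) - d b (ws k) := by
      intro k
      have := htri b (ws n) (ws k) hb (hwsC n) (hwsC k)
      linarith
    exact ge_of_tendsto (hlim _ (hwsC n)) (Eventually.of_forall key)
  -- squeeze
  have hg : Tendsto (fun n => (h (ws 0) - (d (ws 0) (ws n) - d b (ws n))) + (δS - δ n))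
      atTop (𝓝 0) := by
    have h1 : Tendsto (fun n => h (ws 0) - (d (ws 0) (ws n) - d b (ws n))) atTop
        (𝓝 (h (ws 0) - h (ws 0))) := tendsto_const_nhds.sub (hlim _ (hwsC 0))
    have h2 : Tendsto (fun n => δS - δ n) atTop (𝓝 (δS - δS)) :=
      tendsto_const_nhds.sub hδtend
    have := h1.add h2
    simpa using this
  apply squeeze_zero (fun n => by linarith [hlower n]) (fun n => ?_) hg
  have := hupper n
  linarith

/-- Selection of points along a converging almost-geodesic with small step slack. -/
lemma pick_aux (hAG : AlmostGeod (hilD C) ws) {wi : V} (hconv : Tendsto ws atTop (𝓝 wi))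
    {p : V} (hp : p ∈ C) {c : ℝ} (hc : 0 < c) :
    ∃ n, hilD C p (ws n) ≤ h p - h (ws n) + c ∧ ‖ws n - wi‖ ≤ c := by
  have hα := alpha_tendsto hC hlines hb hwsC hlim hAG
  have E1 : ∀ᶠ n in atTop,
      dist (hilD C p (ws n) - hilD C b (ws n)) (h p) < c/2 :=
    Metric.tendsto_nhds.mp (hlim p hp) (c/2) (by positivity)
  have E2 : ∀ᶠ n in atTop, dist (h (ws n) + hilD C b (ws n)) 0 < c/2 :=
    Metric.tendsto_nhds.mp hα (c/2) (by positivity)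
  have E3 : ∀ᶠ n in atTop, dist (ws n) wi < c :=
    Metric.tendsto_nhds.mp hconv c hc
  obtain ⟨n, ⟨e1, e2⟩, e3⟩ := ((E1.and E2).and E3).exists
  rw [Real.dist_eq, abs_lt] at e1
  rw [Real.dist_eq, sub_zero, abs_lt] at e2
  rw [dist_eq_norm] at e3
  exact ⟨n, by linarith [e1.2, e2.2], e3.le⟩

end Seq
end BSD

open BSD in
/-- Hilbert-geometry Busemann points attained along almost-geodesics
converging to boundary points on distinct rays are distinct: the sets `B(x)` and `B(y)`
are disjoint. -/
theorem busemann_sets_disjoint (C : Set V) (hC : IsOpenCone C)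
    (hlines : ∀ v, v ∈ closure C → -v ∈ closure C → v = 0)
    (b : V) (hb : b ∈ C)
    (x y : V) (hx : x ∈ frontier C) (hx0 : x ≠ 0) (hy : y ∈ frontier C) (hy0 : y ≠ 0)
    (hray : ¬ ∃ t : ℝ, 0 < t ∧ y = t • x)
    (h : V → ℝ)
    (hhoro : ¬ ∃ p ∈ C, ∀ u ∈ C, h u = hilD C u p - hilD C b p)
    (hBx : ∃ xs : ℕ → V, (∀ n, xs n ∈ C) ∧ AlmostGeod (hilD C) xs ∧
        Tendsto xs atTop (𝓝 x) ∧
        ∀ u ∈ C, Tendsto (fun n => hilD C u (xs n) - hilD C b (xs n)) atTop (𝓝 (h u)))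
    (hBy : ∃ ys : ℕ → V, (∀ n, ys n ∈ C) ∧ AlmostGeod (hilD C) ys ∧
        Tendsto ys atTop (𝓝 y) ∧
        ∀ u ∈ C, Tendsto (fun n => hilD C u (ys n) - hilD C b (ys n)) atTop (𝓝 (h u))) :
    False := by
  classical
  obtain ⟨xs, hxsC, hxsAG, hxsT, hxsL⟩ := hBx
  obtain ⟨ys, hysC, hysAG, hysT, hysL⟩ := hBy
  have hxcl : x ∈ closure C := frontier_subset_closure hx
  have hycl : y ∈ closure C := frontier_subset_closure hy
  have hψx : 0 < psi C x := psi_pos hC hlines hxcl hx0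
  have hψy : 0 < psi C y := psi_pos hC hlines hycl hy0
  have hCne : ∀ {v : V}, v ∈ C → v ≠ 0 := fun {v} hv h0 => hC.2.2.2.2 (h0 ▸ hv)
  -- continuity radii for psi near x and y
  have heta : ∀ p : V, 0 < psi C p → ∃ η : ℝ, 0 < η ∧
      ∀ v : V, ‖v - p‖ ≤ η → psi C p / 2 ≤ psi C v := by
    intro p hp
    have hev : ∀ᶠ v in 𝓝 p, dist (psi C v) (psi C p) < psi C p / 2 :=
      Metric.tendsto_nhds.mp ((psi_cont (C := C)).tendsto p) _ (by positivity)
    obtain ⟨ε, hε, hball⟩ := Metric.eventually_nhds_iff.mp hev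
    refine ⟨ε/2, by positivity, fun v hv => ?_⟩
    have : dist v p < ε := by rw [dist_eq_norm]; linarith
    have := hball this
    rw [Real.dist_eq, abs_lt] at this
    linarith [this.1]
  obtain ⟨ηx, hηx, hηxP⟩ := heta x hψx
  obtain ⟨ηy, hηy, hηyP⟩ := heta y hψy
  -- choice of starting index
  obtain ⟨n0, hn0⟩ : ∃ n, ‖xs n - x‖ ≤ min ηx 1 := by
    obtain ⟨n, hn⟩ := (Metric.tendsto_nhds.mp hxsT (min ηx 1)
      (lt_min hηx one_pos)).exists
    exact ⟨n, by rw [dist_eq_norm] at hn; exact hn.le⟩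
  -- pick functions
  have PM : ∀ (n : ℕ) (e : ℕ), ∃ m, hilD C (xs n) (ys m) ≤ h (xs n) - h (ys m) + (1/2)^e
      ∧ ‖ys m - y‖ ≤ ηy ∧ ‖ys m - y‖ ≤ (1/2)^e := by
    intro n e
    obtain ⟨m, h1, h2⟩ := pick_aux hC hlines hb hysC hysL hysAG hysT (hxsC n)
      (c := min ((1/2)^e) ηy) (lt_min (by positivity) hηy)
    exact ⟨m, h1.trans (by gcongr; exact min_le_left _ _),
      h2.trans (min_le_right _ _), h2.trans (min_le_left _ _)⟩
  have PN : ∀ (m : ℕ) (e : ℕ), ∃ n, hilD C (ys m) (xs n) ≤ h (ys m) - h (xs n) + (1/2)^e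
      ∧ ‖xs n - x‖ ≤ ηx ∧ ‖xs n - x‖ ≤ (1/2)^e := by
    intro m e
    obtain ⟨n, h1, h2⟩ := pick_aux hC hlines hb hxsC hxsL hxsAG hxsT (hysC m)
      (c := min ((1/2)^e) ηx) (lt_min (by positivity) hηx)
    exact ⟨n, h1.trans (by gcongr; exact min_le_left _ _),
      h2.trans (min_le_right _ _), h2.trans (min_le_left _ _)⟩
  set fM : ℕ → ℕ → ℕ := fun n e => (PM n e).choose with hfM
  set fN : ℕ → ℕ → ℕ := fun m e => (PN m e).choose with hfN
  have specM : ∀ n e, hilD C (xs n) (ys (fM n e)) ≤ h (xs n) - h (ys (fM n e)) + (1/2)^e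
      ∧ ‖ys (fM n e) - y‖ ≤ ηy ∧ ‖ys (fM n e) - y‖ ≤ (1/2)^e := fun n e => (PM n e).choose_spec
  have specN : ∀ m e, hilD C (ys m) (xs (fN m e)) ≤ h (ys m) - h (xs (fN m e)) + (1/2)^e
      ∧ ‖xs (fN m e) - x‖ ≤ ηx ∧ ‖xs (fN m e) - x‖ ≤ (1/2)^e := fun m e => (PN m e).choose_spec
  -- the interleaved index sequence
  set F : ℕ → ℕ × ℕ := fun k => Nat.rec (n0, fM n0 0)
      (fun k p => (fN p.2 (2*k+1), fM (fN p.2 (2*k+1)) (2*(k+1)))) k with hF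
  have hF0 : F 0 = (n0, fM n0 0) := rfl
  have hFsucc : ∀ k, F (k+1) =
      (fN (F k).2 (2*k+1), fM (fN (F k).2 (2*k+1)) (2*(k+1))) := fun k => rfl
  have hF2 : ∀ k, (F k).2 = fM (F k).1 (2*k) := by
    intro k
    cases k with
    | zero => rfl
    | succ k => rw [hFsucc k]
  -- the interleaved sequence
  set z : ℕ → V := fun j => if Even j then xs (F (j/2)).1 else ys (F (j/2)).2 with hz
  have zeven : ∀ k, z (2*k) = xs (F k).1 := by
    intro k
    have h1 : Even (2*k) := even_two_mul k
    have h2 : 2*k/2 = k := by omega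
    simp [hz, h1, h2]
  have zodd : ∀ k, z (2*k+1) = ys (F k).2 := by
    intro k
    have h1 : ¬ Even (2*k+1) := by simp [Nat.even_add_one, even_two_mul]
    have h2 : (2*k+1)/2 = k := by omega
    simp [hz, h1, h2]
  have zC : ∀ j, z j ∈ C := by
    intro j
    by_cases hj : Even j <;> simp [hz, hj] <;> [exact hxsC _; exact hysC _]
  have zcl : ∀ j, z j ∈ closure C := fun j => subset_closure (zC j)
  have zne : ∀ j, z j ≠ 0 := fun j => hCne (zC j)
  have hψz : ∀ j, 0 < psi C (z j) := fun j => psi_pos hC hlines (zcl j) (zne j)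
  -- norm control
  have xprop : ∀ k, ‖xs (F k).1 - x‖ ≤ ηx ∧ ‖xs (F k).1 - x‖ ≤ (1/2 : ℝ)^k := by
    intro k
    cases k with
    | zero =>
        rw [hF0]
        exact ⟨hn0.trans (min_le_left _ _), by
          simpa using hn0.trans (min_le_right _ _)⟩
    | succ k =>
        rw [hFsucc k]
        refine ⟨(specN (F k).2 (2*k+1)).2.1, ?_⟩
        refine ((specN (F k).2 (2*k+1)).2.2).trans ?_
        exact pow_le_pow_of_le_one (by norm_num) (by norm_num) (by omega)
  have yprop : ∀ k, ‖ys (F k).2 - y‖ ≤ ηy ∧ ‖ys (F k).2 - y‖ ≤ (1/2 : ℝ)^k := by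
    intro k
    rw [hF2 k]
    refine ⟨(specM (F k).1 (2*k)).2.1, ?_⟩
    refine ((specM (F k).1 (2*k)).2.2).trans ?_
    exact pow_le_pow_of_le_one (by norm_num) (by norm_num) (by omega)
  -- step bounds
  have stepAll : ∀ j, hilD C (z j) (z (j+1)) ≤ h (z j) - h (z (j+1)) + (1/2)^j := by
    intro j
    rcases Nat.even_or_odd j with hj | hj
    · obtain ⟨k, hk⟩ := hj
      have hjk : j = 2*k := by omega
      subst hjk
      rw [zeven k, show 2*k+1 = 2*k+1 from rfl, zodd k, hF2 k]
      exact (specM (F k).1 (2*k)).1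
    · obtain ⟨k, hk⟩ := hj
      subst hk
      have e1 : 2*k+1+1 = 2*(k+1) := by ring
      rw [zodd k, e1, zeven (k+1), hFsucc k]
      exact (specN (F k).2 (2*k+1)).1
  -- partial sums of Hilbert steps
  have sum1 : ∀ J, (∑ j ∈ Finset.range J, hilD C (z j) (z (j+1))) ≤
      h (z 0) - h (z J) + 2 := by
    intro J
    have key : ∀ J, (∑ j ∈ Finset.range J, hilD C (z j) (z (j+1))) ≤
        h (z 0) - h (z J) + ∑ j ∈ Finset.range J, (1/2 : ℝ)^j := by
      intro J
      induction J with
      | zero => simp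
      | succ J ih =>
          rw [Finset.sum_range_succ, Finset.sum_range_succ]
          have := stepAll J
          linarith
    have := key J
    have h2 := sum_geometric_two_le J
    linarith
  -- Funk lower bound for sums
  have FSum : ∀ J, funkF C (z 0) (z J) ≤
      ∑ j ∈ Finset.range J, funkF C (z j) (z (j+1)) := by
    intro J
    induction J with
    | zero =>
        simp [funkF, funkM_self hC hlines (zC 0)]
    | succ J ih =>
        rw [Finset.sum_range_succ]
        have := funkF_triangle hC hlines (zC 0) (zC J) (zC (J+1))
        linarith
  -- reverse-Funk almost-geodesic property
  have hrevdef : ∀ a b' : V, revF C a b' = hilD C a b' - funkF C a b' := by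
    intro a b'; simp [hilD]
  have rSum : ∀ J, (∑ j ∈ Finset.range J, revF C (z j) (z (j+1))) ≤
      revF C (z 0) (z J) + 2 := by
    intro J
    have e1 : (∑ j ∈ Finset.range J, revF C (z j) (z (j+1))) =
        (∑ j ∈ Finset.range J, hilD C (z j) (z (j+1))) -
        (∑ j ∈ Finset.range J, funkF C (z j) (z (j+1))) := by
      rw [← Finset.sum_sub_distrib]
      exact Finset.sum_congr rfl fun j _ => hrevdef _ _
    have e2 := sum1 J
    have e3 := FSum J
    have e4 : h (z 0) ≤ hilD C (z 0) (z J) + h (z J) :=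
      h_lip hC hlines hb hxsC hxsL (zC 0) (zC J)
    have e5 := hrevdef (z 0) (z J)
    rw [e1]
    linarith
  -- uniform upper bound on revF C (z 0) (z J)
  obtain ⟨ρ0, hρ0, hball0⟩ := Metric.isOpen_iff.mp hC.2.1 (z 0) (zC 0)
  set R : ℝ := max ‖x‖ ‖y‖ + 1 with hR
  have hR0 : 0 ≤ R := by positivity
  have hzR : ∀ j, ‖z j‖ ≤ R := by
    intro j
    rcases Nat.even_or_odd j with hj | hj
    · obtain ⟨k, hk⟩ := hj
      have hjk : j = 2*k := by omega
      subst hjk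
      rw [zeven k]
      have h1 := (xprop k).2
      have h2 : (1/2:ℝ)^k ≤ 1 := pow_le_one₀ (by norm_num) (by norm_num)
      calc ‖xs (F k).1‖ = ‖(xs (F k).1 - x) + x‖ := by rw [sub_add_cancel]
        _ ≤ ‖xs (F k).1 - x‖ + ‖x‖ := norm_add_le _ _
        _ ≤ 1 + max ‖x‖ ‖y‖ := by
            have := le_max_left ‖x‖ ‖y‖; linarith
        _ = R := by rw [hR]; ring
    · obtain ⟨k, hk⟩ := hj
      subst hk
      rw [zodd k]
      have h1 := (yprop k).2
      have h2 : (1/2:ℝ)^k ≤ 1 := pow_le_one₀ (by norm_num) (by norm_num)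
      calc ‖ys (F k).2‖ = ‖(ys (F k).2 - y) + y‖ := by rw [sub_add_cancel]
        _ ≤ ‖ys (F k).2 - y‖ + ‖y‖ := norm_add_le _ _
        _ ≤ 1 + max ‖x‖ ‖y‖ := by
            have := le_max_right ‖x‖ ‖y‖; linarith
        _ = R := by rw [hR]; ring
  set B : ℝ := Real.log (R/ρ0 + 1) + 2 with hB
  have rSum' : ∀ J, (∑ j ∈ Finset.range J, revF C (z j) (z (j+1))) ≤ B := by
    intro J
    have h1 := rSum J
    have h2 : funkM C (z J) (z 0) ≤ R/ρ0 + 1 :=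
      funkM_le_of_norm_le hC (zC 0) hρ0 hball0 (hzR J) hR0
    have h3 : 0 < funkM C (z J) (z 0) := funkM_pos hC hlines (zcl J) (zne J) (zC 0)
    have h4 : revF C (z 0) (z J) ≤ Real.log (R/ρ0 + 1) := Real.log_le_log h3 h2
    rw [hB]; linarith
  -- the multipliers
  set μ : ℕ → ℝ := fun j => funkM C (z (j+1)) (z j) * (psi C (z j) / psi C (z (j+1)))
    with hμ
  have hMpos : ∀ j, 0 < funkM C (z (j+1)) (z j) :=
    fun j => funkM_pos hC hlines (zcl (j+1)) (zne (j+1)) (zC j)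
  have hμ1 : ∀ j, 1 ≤ μ j := by
    intro j
    have h1 := psi_div_le_funkM hC hlines (u := z (j+1)) (zC j)
    have ha := hψz j
    have hbb := hψz (j+1)
    rw [div_le_iff₀ ha] at h1
    show 1 ≤ funkM C (z (j+1)) (z j) * (psi C (z j) / psi C (z (j+1)))
    rw [mul_div_assoc', le_div_iff₀ hbb]
    nlinarith
  have hμpos : ∀ j, 0 < μ j := fun j => lt_of_lt_of_le one_pos (hμ1 j)
  set P : ℕ → ℝ := fun J => ∏ j ∈ Finset.range J, μ j with hP
  have hPpos : ∀ J, 0 < P J := fun J => Finset.prod_pos (fun j _ => hμpos j)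
  have hPsucc : ∀ J, P (J+1) = P J * μ J := fun J => Finset.prod_range_succ μ J
  have hPmono : Monotone P := by
    apply monotone_nat_of_le_succ
    intro J
    rw [hPsucc J]
    nlinarith [hPpos J, hμ1 J]
  have hlogμ : ∀ j, Real.log (μ j) = revF C (z j) (z (j+1)) +
      (Real.log (psi C (z j)) - Real.log (psi C (z (j+1)))) := by
    intro j
    show Real.log (funkM C (z (j+1)) (z j) * (psi C (z j) / psi C (z (j+1)))) = _
    rw [Real.log_mul (ne_of_gt (hMpos j)) (ne_of_gt (div_pos (hψz j) (hψz (j+1)))),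
      Real.log_div (ne_of_gt (hψz j)) (ne_of_gt (hψz (j+1)))]
    rfl
  have hlogP : ∀ J, Real.log (P J) = (∑ j ∈ Finset.range J, revF C (z j) (z (j+1)))
      + (Real.log (psi C (z 0)) - Real.log (psi C (z J))) := by
    intro J
    rw [hP, Real.log_prod (fun j _ => ne_of_gt (hμpos j))]
    rw [Finset.sum_congr rfl fun j _ => hlogμ j, Finset.sum_add_distrib,
      Finset.sum_range_sub' (fun j => Real.log (psi C (z j)))]
  set ρψ : ℝ := min (psi C x / 2) (psi C y / 2) with hρψ
  have hρψpos : 0 < ρψ := lt_min (by positivity) (by positivity)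
  have hψzlb : ∀ j, ρψ ≤ psi C (z j) := by
    intro j
    rcases Nat.even_or_odd j with hj | hj
    · obtain ⟨k, hk⟩ := hj
      have hjk : j = 2*k := by omega
      subst hjk
      rw [zeven k]
      exact (min_le_left _ _).trans (hηxP _ (xprop k).1)
    · obtain ⟨k, hk⟩ := hj
      subst hk
      rw [zodd k]
      exact (min_le_right _ _).trans (hηyP _ (yprop k).1)
  set BP : ℝ := B + Real.log (psi C (z 0)) - Real.log ρψ with hBP
  have hPub : ∀ J, P J ≤ Real.exp BP := by
    intro J
    have h1 : Real.log (P J) ≤ BP := by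
      have h2 := rSum' J
      have h3 : Real.log ρψ ≤ Real.log (psi C (z J)) := Real.log_le_log hρψpos (hψzlb J)
      rw [hlogP J, hBP]
      linarith
    calc P J = Real.exp (Real.log (P J)) := (Real.exp_log (hPpos J)).symm
      _ ≤ Real.exp BP := Real.exp_le_exp.2 h1
  set Pinf : ℝ := ⨆ J, P J with hPinf
  have hPbdd : BddAbove (Set.range P) := ⟨Real.exp BP, by rintro r ⟨J, rfl⟩; exact hPub J⟩
  have hPtend : Tendsto P atTop (𝓝 Pinf) := tendsto_atTop_ciSup hPmono hPbdd
  have hPinfpos : 0 < Pinf := by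
    have : P 0 ≤ Pinf := le_ciSup hPbdd 0
    have hP0 : P 0 = 1 := by simp [hP]
    linarith
  -- the monotone cone sequence
  set zh : ℕ → V := fun j => (psi C (z j))⁻¹ • z j with hzh
  set w : ℕ → V := fun j => (P j)⁻¹ • zh j with hw
  have wstep : ∀ j, w j - w (j+1) ∈ closure C := by
    intro j
    set M : ℝ := funkM C (z (j+1)) (z j) with hM
    have hmem : M • z j - z (j+1) ∈ closure C := funkM_mem hC (zC j)
    set c : ℝ := ((P (j+1)) * psi C (z (j+1)))⁻¹ with hc
    have hcpos : 0 < c := by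
      rw [hc]; exact inv_pos.2 (mul_pos (hPpos (j+1)) (hψz (j+1)))
    have hmem2 : c • (M • z j - z (j+1)) ∈ closure C := smul_mem_cl hC hcpos hmem
    have key : w j - w (j+1) = c • (M • z j - z (j+1)) := by
      show (P j)⁻¹ • ((psi C (z j))⁻¹ • z j) - (P (j+1))⁻¹ • ((psi C (z (j+1)))⁻¹ • z (j+1))
        = c • (M • z j - z (j+1))
      rw [smul_smul, smul_smul, smul_sub, smul_smul]
      have e1 : psi C (z (j+1)) ≠ 0 := ne_of_gt (hψz (j+1))
      have e2 : psi C (z j) ≠ 0 := ne_of_gt (hψz j)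
      have e3 : P j ≠ 0 := ne_of_gt (hPpos j)
      have e4 : funkM C (z (j+1)) (z j) ≠ 0 := ne_of_gt (hMpos j)
      have e5 : μ j = funkM C (z (j+1)) (z j) * (psi C (z j) / psi C (z (j+1))) := rfl
      congr 1
      · congr 1
        rw [hc, hPsucc j, e5, hM]
        field_simp
      · congr 1
        rw [hc, mul_inv]
    rw [key]
    exact hmem2
  have wmono : ∀ i j, i ≤ j → w i - w j ∈ closure C := by
    intro i j hij
    induction j, hij using Nat.le_induction with
    | base => simpa using zero_mem_cl hC
    | succ j hij ih =>
        have : (w i - w j) + (w j - w (j+1)) ∈ closure C :=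
          add_mem_cl hC ih (wstep j)
        have he : (w i - w j) + (w j - w (j+1)) = w i - w (j+1) := by abel
        rwa [he] at this
  -- limits
  have hhalf : Tendsto (fun k : ℕ => (1/2 : ℝ)^k) atTop (𝓝 0) :=
    tendsto_pow_atTop_nhds_zero_of_lt_one (by norm_num) (by norm_num)
  have hxseq : Tendsto (fun k => xs (F k).1) atTop (𝓝 x) := by
    rw [← tendsto_sub_nhds_zero_iff]
    exact squeeze_zero_norm (fun k => (xprop k).2) hhalf
  have hyseq : Tendsto (fun k => ys (F k).2) atTop (𝓝 y) := by
    rw [← tendsto_sub_nhds_zero_iff]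
    exact squeeze_zero_norm (fun k => (yprop k).2) hhalf
  have hzh_even : Tendsto (fun k => zh (2*k)) atTop (𝓝 ((psi C x)⁻¹ • x)) := by
    have h1 : Tendsto (fun k => psi C (xs (F k).1)) atTop (𝓝 (psi C x)) :=
      ((psi_cont (C := C)).tendsto x).comp hxseq
    have h2 := (h1.inv₀ (ne_of_gt hψx)).smul hxseq
    refine h2.congr fun k => ?_
    show _ = (psi C (z (2*k)))⁻¹ • z (2*k)
    rw [zeven k]
  have hzh_odd : Tendsto (fun k => zh (2*k+1)) atTop (𝓝 ((psi C y)⁻¹ • y)) := by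
    have h1 : Tendsto (fun k => psi C (ys (F k).2)) atTop (𝓝 (psi C y)) :=
      ((psi_cont (C := C)).tendsto y).comp hyseq
    have h2 := (h1.inv₀ (ne_of_gt hψy)).smul hyseq
    refine h2.congr fun k => ?_
    show _ = (psi C (z (2*k+1)))⁻¹ • z (2*k+1)
    rw [zodd k]
  have h2k : Tendsto (fun k : ℕ => 2*k) atTop atTop :=
    tendsto_atTop_mono (fun n => (by omega : n ≤ 2*n)) tendsto_id
  have h2k1 : Tendsto (fun k : ℕ => 2*k+1) atTop atTop :=
    tendsto_atTop_mono (fun n => (by omega : n ≤ 2*n+1)) tendsto_id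
  have hP_even : Tendsto (fun k => P (2*k)) atTop (𝓝 Pinf) := hPtend.comp h2k
  have hP_odd : Tendsto (fun k => P (2*k+1)) atTop (𝓝 Pinf) := hPtend.comp h2k1
  set p : V := Pinf⁻¹ • ((psi C x)⁻¹ • x) with hp
  set q : V := Pinf⁻¹ • ((psi C y)⁻¹ • y) with hq
  have w_even : Tendsto (fun k => w (2*k)) atTop (𝓝 p) := by
    have := (hP_even.inv₀ (ne_of_gt hPinfpos)).smul hzh_even
    exact this.congr fun k => rfl
  have w_odd : Tendsto (fun k => w (2*k+1)) atTop (𝓝 q) := by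
    have := (hP_odd.inv₀ (ne_of_gt hPinfpos)).smul hzh_odd
    exact this.congr fun k => rfl
  have hpq : p - q ∈ closure C := by
    have step1 : ∀ i, w (2*i) - q ∈ closure C := by
      intro i
      have ht : Tendsto (fun k => w (2*i) - w (2*k+1)) atTop (𝓝 (w (2*i) - q)) :=
        tendsto_const_nhds.sub w_odd
      refine isClosed_closure.mem_of_tendsto ht (Filter.eventually_atTop.2
        ⟨i, fun k hk => wmono (2*i) (2*k+1) (by omega)⟩)
    have ht2 : Tendsto (fun i => w (2*i) - q) atTop (𝓝 (p - q)) :=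
      w_even.sub tendsto_const_nhds
    exact isClosed_closure.mem_of_tendsto ht2 (Eventually.of_forall step1)
  have hqp : q - p ∈ closure C := by
    have step1 : ∀ i, w (2*i+1) - p ∈ closure C := by
      intro i
      have ht : Tendsto (fun k => w (2*i+1) - w (2*k)) atTop (𝓝 (w (2*i+1) - p)) :=
        tendsto_const_nhds.sub w_even
      refine isClosed_closure.mem_of_tendsto ht (Filter.eventually_atTop.2
        ⟨i+1, fun k hk => wmono (2*i+1) (2*k) (by omega)⟩)
    have ht2 : Tendsto (fun i => w (2*i+1) - p) atTop (𝓝 (q - p)) :=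
      w_odd.sub tendsto_const_nhds
    exact isClosed_closure.mem_of_tendsto ht2 (Eventually.of_forall step1)
  have heq : p = q := by
    have := hlines (p - q) hpq (by rw [neg_sub]; exact hqp)
    exact sub_eq_zero.mp this
  -- conclude
  rw [hp, hq] at heq
  have heq2 : (psi C x)⁻¹ • x = (psi C y)⁻¹ • y :=
    smul_right_injective V (inv_ne_zero (ne_of_gt hPinfpos)) heq
  refine hray ⟨psi C y * (psi C x)⁻¹, by positivity, ?_⟩
  calc y = psi C y • ((psi C y)⁻¹ • y) := (smul_inv_smul₀ (ne_of_gt hψy) y).symm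
    _ = psi C y • ((psi C x)⁻¹ • x) := by rw [heq2]
    _ = (psi C y * (psi C x)⁻¹) • x := smul_smul ..
end
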